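/- Let (G,Δ,ε,φ,S,α,β) be a finite-dimensional quasi-Hopf algebra over a field k with invertible antipode S, let Ĝ⋈G be the diagonal crossed product (the quantum double D(G)), let A be a unital associative k-algebra and γ : G → A a unital algebra homomorphism. Then the relation γ_L(φ⋈a) := (φ⊗id)(L)·γ(a) establishes a one-to-one correspondence between: (1) unital algebra homomorphisms γ_L : Ĝ⋈G → A with γ_L(ε⋈a) = γ(a) for all a ∈ G; and (2) elements L ∈ G⊗A satisfying (ε⊗id)(L) = 1_A together with [1⊗γ(a)]·L = [S⁻¹(a₍₁₎')⊗1]·L·[a₍₋₁₎⊗γ(a₍₀₎)] for all a ∈ G (where δ(a) = a₍₋₁₎⊗a₍₀₎⊗a₍₁₎' with δ := (Δ⊗id)∘Δ) and L¹³·L²³ = [Ω⁵⊗Ω⁴⊗1_A]·(Δ⊗id)(L)·[Ω¹⊗Ω²⊗γ(Ω³)], where Ω := (id⊗id⊗id⊗S⁻¹⊗S⁻¹)(f⁴⁵·Φ⁻¹). -/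

import Mathlib

open TensorProduct

set_option maxSynthPendingDepth 8
set_option synthInstance.maxHeartbeats 1000000
set_option maxHeartbeats 1000000

noncomputable section

namespace QHA

variable (k G : Type) [Field k] [Ring G] [Algebra k G]

/-- The data of a (finite-dimensional) quasi-Hopf algebra: coproduct, counit,
reassociator (together with its inverse), antipode (as an invertible linear map)
and the elements `α`, `β`. -/
structure QuasiHopfData : Type where
  Δ : G →ₐ[k] G ⊗[k] G
  ε : G →ₐ[k] k
  φ : G ⊗[k] (G ⊗[k] G)
  φ' : G ⊗[k] (G ⊗[k] G)
  S : G ≃ₗ[k] G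
  α : G
  β : G

/-- Swap of legs 2 and 3 of the triple tensor product. -/
def c23 : G ⊗[k] (G ⊗[k] G) →ₐ[k] G ⊗[k] (G ⊗[k] G) :=
  Algebra.TensorProduct.map (AlgHom.id k G) (Algebra.TensorProduct.comm k G G).toAlgHom

/-- Swap of legs 1 and 2 of the triple tensor product. -/
def c12 : G ⊗[k] (G ⊗[k] G) →ₐ[k] G ⊗[k] (G ⊗[k] G) :=
  ((Algebra.TensorProduct.assoc k k k G G G).toAlgHom.comp
    (Algebra.TensorProduct.map (Algebra.TensorProduct.comm k G G).toAlgHom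
      (AlgHom.id k G))).comp
    (Algebra.TensorProduct.assoc k k k G G G).symm.toAlgHom

/-- Place an element of `G ⊗ G` in legs 1,2 of `G ⊗ G ⊗ G`. -/
def e12 : G ⊗[k] G →ₐ[k] G ⊗[k] (G ⊗[k] G) :=
  Algebra.TensorProduct.map (AlgHom.id k G) Algebra.TensorProduct.includeLeft

/-- Place an element of `G ⊗ G` in legs 1,3 of `G ⊗ G ⊗ G`. -/
def e13 : G ⊗[k] G →ₐ[k] G ⊗[k] (G ⊗[k] G) :=
  Algebra.TensorProduct.map (AlgHom.id k G) Algebra.TensorProduct.includeRight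

/-- Place an element of `G ⊗ G` in legs 2,3 of `G ⊗ G ⊗ G`. -/
def e23 : G ⊗[k] G →ₐ[k] G ⊗[k] (G ⊗[k] G) :=
  Algebra.TensorProduct.includeRight

/-- `ψ ⊗ 1`, an element of `G ⊗ G ⊗ G` placed in legs 1,2,3 of the 4-fold
tensor product. -/
def padR (ψ : G ⊗[k] (G ⊗[k] G)) : G ⊗[k] (G ⊗[k] (G ⊗[k] G)) :=
  (Algebra.TensorProduct.map (AlgHom.id k G) (Algebra.TensorProduct.assoc k k k G G G).toAlgHom)
    ((Algebra.TensorProduct.assoc k k k G (G ⊗[k] G) G) (ψ ⊗ₜ[k] (1:G)))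

/-- The product on the tensor product of two (not necessarily unital/associative)
algebras given by bilinear multiplications `mV`, `mW`. -/
def mulTens {V W : Type} [AddCommGroup V] [Module k V] [AddCommGroup W] [Module k W]
    (mV : V →ₗ[k] V →ₗ[k] V) (mW : W →ₗ[k] W →ₗ[k] W) :
    (V ⊗[k] W) →ₗ[k] (V ⊗[k] W) →ₗ[k] (V ⊗[k] W) :=
  TensorProduct.curry ((TensorProduct.map (TensorProduct.lift mV) (TensorProduct.lift mW)) ∘ₗ
    (TensorProduct.tensorTensorTensorComm k V W V W).toLinearMap)

/-- The functional `x ↦ χ (d * x * c)`; this is `c ⇀ χ ↼ d` in Hopf algebra notation. -/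
def shiftF (c d : G) (χ : Module.Dual k G) : Module.Dual k G :=
  χ ∘ₗ (LinearMap.mulLeft k d) ∘ₗ (LinearMap.mulRight k c)

namespace QuasiHopfData

variable {k G}
variable (H : QuasiHopfData k G)

/-- The opposite coproduct `Δᵒᵖ = τ ∘ Δ`. -/
def Δop : G →ₐ[k] G ⊗[k] G := (Algebra.TensorProduct.comm k G G).toAlgHom.comp H.Δ

/-- `(id ⊗ Δ) ∘ Δ`. -/
def ΔR : G →ₐ[k] G ⊗[k] (G ⊗[k] G) :=
  (Algebra.TensorProduct.map (AlgHom.id k G) H.Δ).comp H.Δ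

/-- `(Δ ⊗ id) ∘ Δ` (reassociated); this is the two-sided coaction `δ`. -/
def ΔL : G →ₐ[k] G ⊗[k] (G ⊗[k] G) :=
  ((Algebra.TensorProduct.assoc k k k G G G).toAlgHom.comp
    (Algebra.TensorProduct.map H.Δ (AlgHom.id k G))).comp H.Δ

/-- `id ⊗ id ⊗ Δ` on the triple tensor product. -/
def ooΔ : G ⊗[k] (G ⊗[k] G) →ₐ[k] G ⊗[k] (G ⊗[k] (G ⊗[k] G)) :=
  Algebra.TensorProduct.map (AlgHom.id k G) (Algebra.TensorProduct.map (AlgHom.id k G) H.Δ)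

/-- `Δ ⊗ id ⊗ id` on the triple tensor product. -/
def Δoo : G ⊗[k] (G ⊗[k] G) →ₐ[k] G ⊗[k] (G ⊗[k] (G ⊗[k] G)) :=
  (Algebra.TensorProduct.assoc k k k G G (G ⊗[k] G)).toAlgHom.comp
    (Algebra.TensorProduct.map H.Δ (AlgHom.id k (G ⊗[k] G)))

/-- `id ⊗ Δ ⊗ id` on the triple tensor product. -/
def oΔo : G ⊗[k] (G ⊗[k] G) →ₐ[k] G ⊗[k] (G ⊗[k] (G ⊗[k] G)) :=
  (Algebra.TensorProduct.map (AlgHom.id k G)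
      (Algebra.TensorProduct.assoc k k k G G G).toAlgHom).comp
    (Algebra.TensorProduct.map (AlgHom.id k G)
      (Algebra.TensorProduct.map H.Δ (AlgHom.id k G)))

/-- Contraction of the first tensor leg with the counit. -/
def κ1 (M : Type) [Ring M] [Algebra k M] : G ⊗[k] M →ₐ[k] M :=
  (Algebra.TensorProduct.lid k M).toAlgHom.comp
    (Algebra.TensorProduct.map H.ε (AlgHom.id k M))

/-- Contraction of the last tensor leg with the counit. -/
def κ2 (M : Type) [Ring M] [Algebra k M] : M ⊗[k] G →ₐ[k] M :=
  (Algebra.TensorProduct.rid k k M).toAlgHom.comp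
    (Algebra.TensorProduct.map (AlgHom.id k M) H.ε)

/-- The multiplication on the dual space `Ĝ`, `⟨χξ, a⟩ = ⟨χ ⊗ ξ, Δ(a)⟩`. -/
def dmul (χ ξ : Module.Dual k G) : Module.Dual k G :=
  ((LinearMap.mul' k k) ∘ₗ (TensorProduct.map χ ξ)) ∘ₗ H.Δ.toLinearMap

/-- The axioms of a quasi-Hopf algebra for the data `H`. -/
structure IsQuasiHopf : Prop where
  S_mul : ∀ a b : G, H.S (a * b) = H.S b * H.S a
  S_one : H.S 1 = 1
  φ_mul_inv : H.φ * H.φ' = 1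
  φ_inv_mul : H.φ' * H.φ = 1
  Δ_assoc : ∀ a : G, H.ΔR a * H.φ = H.φ * H.ΔL a
  pentagon : H.ooΔ H.φ * H.Δoo H.φ =
    ((1:G) ⊗ₜ[k] H.φ) * H.oΔo H.φ * QHA.padR k G H.φ
  counit_left : ∀ a : G, H.κ1 G (H.Δ a) = a
  counit_right : ∀ a : G, H.κ2 G (H.Δ a) = a
  counit_mid : (Algebra.TensorProduct.map (AlgHom.id k G) (H.κ1 G)) H.φ = 1
  antipode_left : ∀ a : G,
    (LinearMap.mul' k G) (TensorProduct.map
      ((LinearMap.mulRight k H.α) ∘ₗ H.S.toLinearMap) LinearMap.id (H.Δ a)) = H.ε a • H.α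
  antipode_right : ∀ a : G,
    (LinearMap.mul' k G) (TensorProduct.map
      (LinearMap.mulRight k H.β) H.S.toLinearMap (H.Δ a)) = H.ε a • H.β
  antipode_φ :
    (LinearMap.mul' k G) (TensorProduct.map (LinearMap.mulRight k H.β)
      ((LinearMap.mul' k G) ∘ₗ (TensorProduct.map
        ((LinearMap.mulRight k H.α) ∘ₗ H.S.toLinearMap) LinearMap.id)) H.φ) = 1
  antipode_φ' :
    (LinearMap.mul' k G) (TensorProduct.map
      ((LinearMap.mulRight k H.α) ∘ₗ H.S.toLinearMap)
      ((LinearMap.mul' k G) ∘ₗ (TensorProduct.map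
        (LinearMap.mulRight k H.β) H.S.toLinearMap)) H.φ') = 1

/-- Quasitriangularity of an element `R` (with specified two-sided inverse `Rinv`)
for the quasi-Hopf algebra `H`:  the intertwining property and the two hexagon
relations, with the leg-numbering conventions of the paper. -/
structure IsQT (R Rinv : G ⊗[k] G) : Prop where
  mul_inv : R * Rinv = 1
  inv_mul : Rinv * R = 1
  intertwine : ∀ a : G, H.Δop a * R = R * H.Δ a
  hexagon1 : (Algebra.TensorProduct.assoc k k k G G G)
      ((Algebra.TensorProduct.map H.Δ (AlgHom.id k G)) R)
    = QHA.c23 k G (QHA.c12 k G H.φ) * QHA.e13 k G R * QHA.c23 k G H.φ' *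
      QHA.e23 k G R * H.φ
  hexagon2 : (Algebra.TensorProduct.map (AlgHom.id k G) H.Δ) R
    = QHA.c12 k G (QHA.c23 k G H.φ') * QHA.e13 k G R * QHA.c12 k G H.φ *
      QHA.e12 k G R * H.φ'

end QuasiHopfData

end QHA

namespace QHA

variable (k G : Type) [Field k] [Ring G] [Algebra k G]

/-- Place a 4-tensor into legs 1–4 of the 5-fold tensor product. -/
def pad4 : G ⊗[k] (G ⊗[k] (G ⊗[k] G)) →ₐ[k] G ⊗[k] (G ⊗[k] (G ⊗[k] (G ⊗[k] G))) :=
  Algebra.TensorProduct.map (AlgHom.id k G) (Algebra.TensorProduct.map (AlgHom.id k G)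
    (Algebra.TensorProduct.map (AlgHom.id k G)
      (Algebra.TensorProduct.includeLeft : G →ₐ[k] G ⊗[k] G)))

/-- Place a 3-tensor into legs 1–3 of the 5-fold tensor product. -/
def pad3 : G ⊗[k] (G ⊗[k] G) →ₐ[k] G ⊗[k] (G ⊗[k] (G ⊗[k] (G ⊗[k] G))) :=
  Algebra.TensorProduct.map (AlgHom.id k G) (Algebra.TensorProduct.map (AlgHom.id k G)
    (Algebra.TensorProduct.includeLeft : G →ₐ[k] G ⊗[k] (G ⊗[k] G)))

/-- Place a 2-tensor into legs 4,5 of the 5-fold tensor product. -/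
def pad45 : G ⊗[k] G →ₐ[k] G ⊗[k] (G ⊗[k] (G ⊗[k] (G ⊗[k] G))) :=
  (Algebra.TensorProduct.includeRight :
      (G ⊗[k] (G ⊗[k] (G ⊗[k] G))) →ₐ[k] G ⊗[k] (G ⊗[k] (G ⊗[k] (G ⊗[k] G)))).comp
    ((Algebra.TensorProduct.includeRight :
        (G ⊗[k] (G ⊗[k] G)) →ₐ[k] G ⊗[k] (G ⊗[k] (G ⊗[k] G))).comp
      (Algebra.TensorProduct.includeRight :
        (G ⊗[k] G) →ₐ[k] G ⊗[k] (G ⊗[k] G)))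

/-- Place a 2-tensor into legs 1,2 of the 5-fold tensor product. -/
def pad12 : G ⊗[k] G →ₐ[k] G ⊗[k] (G ⊗[k] (G ⊗[k] (G ⊗[k] G))) :=
  Algebra.TensorProduct.map (AlgHom.id k G)
    (Algebra.TensorProduct.includeLeft : G →ₐ[k] G ⊗[k] (G ⊗[k] (G ⊗[k] G)))

/-- Contraction of the first leg of `G ⊗ A` with a functional. -/
def contractL {A : Type} [AddCommGroup A] [Module k A]
    (χ : Module.Dual k G) (L : G ⊗[k] A) : A :=
  (TensorProduct.lid k A) ((TensorProduct.map χ LinearMap.id) L)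

namespace QuasiHopfData

variable {k G}
variable (H : QuasiHopfData k G)

/-- Apply `Δ` to the first leg of `G ⊗ M`. -/
def coact (M : Type) [Ring M] [Algebra k M] : G ⊗[k] M →ₐ[k] G ⊗[k] (G ⊗[k] M) :=
  (Algebra.TensorProduct.assoc k k k G G M).toAlgHom.comp
    (Algebra.TensorProduct.map H.Δ (AlgHom.id k M))

/-- `(δ ⊗ id ⊗ id)` from the 3-fold to the 5-fold tensor product. -/
def δexp : G ⊗[k] (G ⊗[k] G) →ₐ[k] G ⊗[k] (G ⊗[k] (G ⊗[k] (G ⊗[k] G))) :=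
  ((Algebra.TensorProduct.map (AlgHom.id k G)
      (Algebra.TensorProduct.assoc k k k G G (G ⊗[k] G)).toAlgHom).comp
    (Algebra.TensorProduct.assoc k k k G (G ⊗[k] G) (G ⊗[k] G)).toAlgHom).comp
    (Algebra.TensorProduct.map H.ΔL (AlgHom.id k (G ⊗[k] G)))

/-- The reassociator `Φ` of the two-sided coaction `(δ, Φ)`:
`Φ = [(id⊗Δ⊗id)(φ)⊗1]·[φ⊗1⊗1]·[(δ⊗id⊗id)(φ⁻¹)]`. -/
def bigΦ : G ⊗[k] (G ⊗[k] (G ⊗[k] (G ⊗[k] G))) :=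
  QHA.pad4 k G (H.oΔo H.φ) * QHA.pad3 k G H.φ * H.δexp H.φ'

/-- `id ⊗ id ⊗ id ⊗ S⁻¹ ⊗ S⁻¹` on the 5-fold tensor product. -/
def idS2 : G ⊗[k] (G ⊗[k] (G ⊗[k] (G ⊗[k] G))) →ₗ[k]
    G ⊗[k] (G ⊗[k] (G ⊗[k] (G ⊗[k] G))) :=
  TensorProduct.map LinearMap.id (TensorProduct.map LinearMap.id
    (TensorProduct.map LinearMap.id
      (TensorProduct.map H.S.symm.toLinearMap H.S.symm.toLinearMap)))

/-- The canonical embedding `i_D : G → Ĝ ⊗ G`, `a ↦ ε ⊗ a`. -/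
def iD : G →ₗ[k] Module.Dual k G ⊗[k] G :=
  (TensorProduct.mk k (Module.Dual k G) G) H.ε.toLinearMap

/-- The unit `ε ⊗ 1` of the quantum double. -/
def oneD : Module.Dual k G ⊗[k] G := H.ε.toLinearMap ⊗ₜ[k] (1:G)

/-- The defining formula for the multiplication of the diagonal crossed product
`Ĝ ⋈ G` (Eq. (3.2) of the paper):  for all Sweedler-type decompositions of `Ω`,
of `ψ` and of `δ(a)`,
`(φ⋈a)(ψ⋈b) = [(Ω¹⇀φ↼Ω⁵)(Ω²⇀ψ₍₂₎↼Ω⁴)] ⋈ [Ω³·(ψ₍₃₎ ▷ a ◁ Ŝ⁻¹(ψ₍₁₎))·b]`. -/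
def CrossChar (Ω : G ⊗[k] (G ⊗[k] (G ⊗[k] (G ⊗[k] G))))
    (m : (Module.Dual k G ⊗[k] G) →ₗ[k] (Module.Dual k G ⊗[k] G) →ₗ[k]
      (Module.Dual k G ⊗[k] G)) : Prop :=
  ∀ (φf ψf : Module.Dual k G) (a b : G),
  ∀ (ι₅ κ ν : Type) (_ : Fintype ι₅) (_ : Fintype κ) (_ : Fintype ν),
  ∀ (O1 O2 O3 O4 O5 : ι₅ → G) (p1 p2 p3 : κ → Module.Dual k G) (am1 a0 a1 : ν → G),
    Ω = ∑ n : ι₅, O1 n ⊗ₜ[k] (O2 n ⊗ₜ[k] (O3 n ⊗ₜ[k] (O4 n ⊗ₜ[k] O5 n))) →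
    (∀ x y z : G, ψf (x * y * z) = ∑ j : κ, p1 j x * p2 j y * p3 j z) →
    H.ΔL a = ∑ l : ν, am1 l ⊗ₜ[k] (a0 l ⊗ₜ[k] a1 l) →
    m (φf ⊗ₜ[k] a) (ψf ⊗ₜ[k] b)
      = ∑ n : ι₅, ∑ j : κ,
          (H.dmul (QHA.shiftF k G (O1 n) (O5 n) φf)
                  (QHA.shiftF k G (O2 n) (O4 n) (p2 j)))
            ⊗ₜ[k]
          (O3 n * (∑ l : ν, (p3 j (am1 l) * p1 j (H.S.symm (a1 l))) • a0 l) * b)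

/-- The conditions of Theorem 3.2 of the paper characterizing the quantum double:
`m` is an associative multiplication with unit `ε ⊗ 1`, such that `i_D` is a
unital algebra embedding and the universal `Δ`-flip operator `D` satisfies the
`Δ`-flip relation and the coherence (hexagon-type) relation. -/
def DoubleMul {ι ι' : Type} [Fintype ι] [Fintype ι'] (X Y Z : ι → G) (P Q R₀ : ι' → G)
    (D : G ⊗[k] (Module.Dual k G ⊗[k] G))
    (m : (Module.Dual k G ⊗[k] G) →ₗ[k] (Module.Dual k G ⊗[k] G) →ₗ[k]
      (Module.Dual k G ⊗[k] G)) : Prop :=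
  (∀ u v w : Module.Dual k G ⊗[k] G, m (m u v) w = m u (m v w)) ∧
  (∀ u : Module.Dual k G ⊗[k] G, m H.oneD u = u) ∧
  (∀ u : Module.Dual k G ⊗[k] G, m u H.oneD = u) ∧
  (∀ a b : G, m (H.iD a) (H.iD b) = H.iD (a * b)) ∧
  (∀ a : G,
    QHA.mulTens k (LinearMap.mul k G) m D
        ((TensorProduct.map LinearMap.id H.iD) (H.Δ a))
      = QHA.mulTens k (LinearMap.mul k G) m
          ((TensorProduct.map LinearMap.id H.iD) (H.Δop a)) D) ∧
  (QHA.mulTens k (LinearMap.mul k G) (QHA.mulTens k (LinearMap.mul k G) m)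
    (QHA.mulTens k (LinearMap.mul k G) (QHA.mulTens k (LinearMap.mul k G) m)
      (QHA.mulTens k (LinearMap.mul k G) (QHA.mulTens k (LinearMap.mul k G) m)
        (QHA.mulTens k (LinearMap.mul k G) (QHA.mulTens k (LinearMap.mul k G) m)
          (∑ i : ι, Y i ⊗ₜ[k] (Z i ⊗ₜ[k] H.iD (X i)))
          ((TensorProduct.map LinearMap.id
            ((TensorProduct.mk k G (Module.Dual k G ⊗[k] G)) 1)) D))
        (∑ j : ι', P j ⊗ₜ[k] (R₀ j ⊗ₜ[k] H.iD (Q j))))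
      ((1:G) ⊗ₜ[k] D))
    ((TensorProduct.map LinearMap.id (TensorProduct.map LinearMap.id H.iD)) H.φ)
  = (TensorProduct.assoc k G G (Module.Dual k G ⊗[k] G))
      ((TensorProduct.map H.Δ.toLinearMap LinearMap.id) D))

end QuasiHopfData

end QHA

namespace QHA

variable {k G : Type} [Field k] [Ring G] [Algebra k G]
variable {A : Type} [Ring A] [Algebra k A]

/-- The conditions on `L ∈ G ⊗ A` of being a normal coherent (left diagonal)
`δ`-implementer with respect to `γ : G → A` (Corollary 3.3 of the paper). -/
def LConds (H : QuasiHopfData k G) (γA : G →ₐ[k] A)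
    (Ω : G ⊗[k] (G ⊗[k] (G ⊗[k] (G ⊗[k] G)))) (L : G ⊗[k] A) : Prop :=
  (H.κ1 A L = 1) ∧
  (∀ a : G, ∀ (ν : Type) (_ : Fintype ν), ∀ am1 a0 a1 : ν → G,
    H.ΔL a = ∑ l : ν, am1 l ⊗ₜ[k] (a0 l ⊗ₜ[k] a1 l) →
    ((1:G) ⊗ₜ[k] γA a) * L
      = ∑ l : ν, (H.S.symm (a1 l) ⊗ₜ[k] (1:A)) * L * (am1 l ⊗ₜ[k] γA (a0 l))) ∧
  (∀ (ι₅ : Type) (_ : Fintype ι₅), ∀ O1 O2 O3 O4 O5 : ι₅ → G,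
    Ω = ∑ n : ι₅, O1 n ⊗ₜ[k] (O2 n ⊗ₜ[k] (O3 n ⊗ₜ[k] (O4 n ⊗ₜ[k] O5 n))) →
    (TensorProduct.map LinearMap.id ((TensorProduct.mk k G A) 1)) L *
        ((1:G) ⊗ₜ[k] L)
      = ∑ n : ι₅, (O5 n ⊗ₜ[k] (O4 n ⊗ₜ[k] (1:A))) *
          ((TensorProduct.assoc k G G A)
            ((TensorProduct.map H.Δ.toLinearMap LinearMap.id) L)) *
          (O1 n ⊗ₜ[k] (O2 n ⊗ₜ[k] γA (O3 n))))

/-- `γ_L : Ĝ ⋈ G → A` is a unital algebra homomorphism extending `γ`. -/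
def GLConds (H : QuasiHopfData k G) (γA : G →ₐ[k] A)
    (m : (Module.Dual k G ⊗[k] G) →ₗ[k] (Module.Dual k G ⊗[k] G) →ₗ[k]
      (Module.Dual k G ⊗[k] G))
    (γL : Module.Dual k G ⊗[k] G →ₗ[k] A) : Prop :=
  (∀ u v : Module.Dual k G ⊗[k] G, γL (m u v) = γL u * γL v) ∧
  (γL H.oneD = 1) ∧
  (∀ a : G, γL (H.iD a) = γA a)

/-- The relation `γ_L(φ ⋈ a) = (φ ⊗ id)(L) · γ(a)`. -/
def LRel (H : QuasiHopfData k G) (γA : G →ₐ[k] A) (L : G ⊗[k] A)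
    (γL : Module.Dual k G ⊗[k] G →ₗ[k] A) : Prop :=
  ∀ (φf : Module.Dual k G) (a : G),
    γL (φf ⊗ₜ[k] a) = QHA.contractL k G φf L * γA a

end QHA


namespace SAux

open QHA

variable {k G : Type} [Field k] [Ring G] [Algebra k G]
variable {A : Type} [Ring A] [Algebra k A]

/-- contraction of the first tensor leg with a functional -/
def ctrL {M : Type} [AddCommGroup M] [Module k M] (χ : Module.Dual k G) :
    G ⊗[k] M →ₗ[k] M :=
  (TensorProduct.lid k M).toLinearMap ∘ₗ TensorProduct.map χ LinearMap.id

@[simp] lemma ctrL_tmul {M : Type} [AddCommGroup M] [Module k M]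
    (χ : Module.Dual k G) (g : G) (m : M) :
    ctrL χ (g ⊗ₜ[k] m) = χ g • m := by
  simp [ctrL]

lemma contractL_eq (χ : Module.Dual k G) (L : G ⊗[k] A) :
    QHA.contractL k G χ L = ctrL χ L := rfl

lemma ctrL_add_chi {M : Type} [AddCommGroup M] [Module k M]
    (χ₁ χ₂ : Module.Dual k G) (x : G ⊗[k] M) :
    ctrL (χ₁ + χ₂) x = ctrL χ₁ x + ctrL χ₂ x := by
  induction x using TensorProduct.induction_on with
  | zero => simp
  | tmul g m => simp [add_smul]
  | add x y hx hy => simp only [map_add, hx, hy]; abel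

lemma ctrL_smul_chi {M : Type} [AddCommGroup M] [Module k M]
    (c : k) (χ : Module.Dual k G) (x : G ⊗[k] M) :
    ctrL (c • χ) x = c • ctrL χ x := by
  induction x using TensorProduct.induction_on with
  | zero => simp
  | tmul g m => simp [smul_smul]
  | add x y hx hy => simp only [map_add, hx, hy, smul_add]

lemma ctrL_sum_chi {M : Type} [AddCommGroup M] [Module k M]
    {ι : Type} (s : Finset ι) (χ : ι → Module.Dual k G) (x : G ⊗[k] M) :
    ctrL (∑ j ∈ s, χ j) x = ∑ j ∈ s, ctrL (χ j) x := by
  classical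
  induction s using Finset.induction_on with
  | empty => simp [show ctrL (0 : Module.Dual k G) x = 0 from by
      induction x using TensorProduct.induction_on <;> simp_all]
  | insert _ _ h ih => rw [Finset.sum_insert h, Finset.sum_insert h, ctrL_add_chi, ih]

lemma decomp {ι : Type} [Fintype ι] (b : Module.Basis ι k G)
    {M : Type} [AddCommGroup M] [Module k M] (x : G ⊗[k] M) :
    x = ∑ i, b i ⊗ₜ[k] ctrL (b.coord i) x := by
  induction x using TensorProduct.induction_on with
  | zero => simp
  | tmul g m =>
      simp only [ctrL_tmul]
      calc g ⊗ₜ[k] m = (∑ i, b.repr g i • b i) ⊗ₜ[k] m := by rw [Module.Basis.sum_repr]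
        _ = ∑ i, b i ⊗ₜ[k] ((b.coord i) g • m) := by
            rw [TensorProduct.sum_tmul]
            refine Finset.sum_congr rfl fun i _ => ?_
            rw [TensorProduct.smul_tmul, Module.Basis.coord_apply]
  | add x y hx hy =>
      conv_lhs => rw [hx, hy]
      simp [map_add, TensorProduct.tmul_add, Finset.sum_add_distrib]

lemma dual_expand {ι : Type} [Fintype ι] (b : Module.Basis ι k G) (χ : Module.Dual k G) :
    χ = ∑ i, χ (b i) • b.coord i := by
  refine b.ext fun j => ?_
  simp only [LinearMap.coe_sum, Finset.sum_apply, LinearMap.smul_apply,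
    Module.Basis.coord_apply, Module.Basis.repr_self, smul_eq_mul]
  rw [Finset.sum_eq_single j]
  · simp
  · intro i _ hij; simp [Finsupp.single_apply, Ne.symm hij]
  · intro h; exact absurd (Finset.mem_univ j) h

lemma ctr_inj {ι : Type} [Fintype ι] (b : Module.Basis ι k G)
    {M : Type} [AddCommGroup M] [Module k M] {x y : G ⊗[k] M}
    (h : ∀ χ : Module.Dual k G, ctrL χ x = ctrL χ y) : x = y := by
  rw [decomp b x, decomp b y]
  exact Finset.sum_congr rfl fun i _ => by rw [h]

def ctr2 {M : Type} [AddCommGroup M] [Module k M] (χ ξ : Module.Dual k G) :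
    G ⊗[k] (G ⊗[k] M) →ₗ[k] M := ctrL ξ ∘ₗ ctrL χ

@[simp] lemma ctr2_tmul {M : Type} [AddCommGroup M] [Module k M]
    (χ ξ : Module.Dual k G) (g h : G) (m : M) :
    ctr2 χ ξ (g ⊗ₜ[k] (h ⊗ₜ[k] m)) = χ g • ξ h • m := by
  simp [ctr2]

lemma ctr2_inj {ι : Type} [Fintype ι] (b : Module.Basis ι k G)
    {M : Type} [AddCommGroup M] [Module k M] {x y : G ⊗[k] (G ⊗[k] M)}
    (h : ∀ χ ξ : Module.Dual k G, ctr2 χ ξ x = ctr2 χ ξ y) : x = y :=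
  ctr_inj b fun χ => ctr_inj b fun ξ => h χ ξ

lemma ctrL_one_mul (χ : Module.Dual k G) (c : A) (L : G ⊗[k] A) :
    ctrL χ (((1:G) ⊗ₜ[k] c) * L) = c * ctrL χ L := by
  induction L using TensorProduct.induction_on with
  | zero => simp
  | tmul g x => simp [Algebra.TensorProduct.tmul_mul_tmul, mul_smul_comm]
  | add x y hx hy => simp only [mul_add, map_add, hx, hy]

lemma ctrL_sandwich (χ : Module.Dual k G) (u p : G) (c : A) (L : G ⊗[k] A) :
    ctrL χ ((u ⊗ₜ[k] (1:A)) * L * (p ⊗ₜ[k] c))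
      = ctrL (QHA.shiftF k G p u χ) L * c := by
  induction L using TensorProduct.induction_on with
  | zero => simp
  | tmul g x =>
      simp [Algebra.TensorProduct.tmul_mul_tmul, QHA.shiftF, smul_mul_assoc,
        mul_assoc]
  | add x y hx hy => simp only [mul_add, add_mul, map_add, hx, hy]


lemma ctr2_13_23 (χ ξ : Module.Dual k G) (L L' : G ⊗[k] A) :
    ctr2 χ ξ ((TensorProduct.map LinearMap.id ((TensorProduct.mk k G A) 1)) L *
        ((1:G) ⊗ₜ[k] L'))
      = ctrL χ L * ctrL ξ L' := by
  induction L using TensorProduct.induction_on with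
  | zero => simp
  | tmul g x =>
      induction L' using TensorProduct.induction_on with
      | zero => simp
      | tmul h y =>
          simp only [TensorProduct.map_tmul, LinearMap.id_coe, id_eq,
            TensorProduct.mk_apply, Algebra.TensorProduct.tmul_mul_tmul,
            one_mul, mul_one, ctr2_tmul, ctrL_tmul, smul_mul_assoc,
            mul_smul_comm]
          rw [smul_comm]
      | add u v hu hv =>
          simp only [TensorProduct.tmul_add, mul_add, map_add, hu, hv, mul_add]
  | add u v hu hv => simp only [map_add, add_mul, hu, hv, add_mul]

lemma ctr2_sandwich_aux (χ ξ : Module.Dual k G) (u v p q : G) (c x : A)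
    (w : G ⊗[k] G) :
    ctr2 χ ξ ((u ⊗ₜ[k] (v ⊗ₜ[k] (1:A))) *
        ((TensorProduct.assoc k G G A) (w ⊗ₜ[k] x)) * (p ⊗ₜ[k] (q ⊗ₜ[k] c)))
      = (LinearMap.mul' k k)
          (TensorProduct.map (QHA.shiftF k G p u χ) (QHA.shiftF k G q v ξ) w)
            • (x * c) := by
  induction w using TensorProduct.induction_on with
  | zero => simp
  | tmul s t =>
      simp [Algebra.TensorProduct.tmul_mul_tmul, QHA.shiftF, mul_assoc,
        smul_smul]
  | add w₁ w₂ h₁ h₂ =>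
      simp only [TensorProduct.add_tmul, map_add, add_mul, mul_add, h₁, h₂,
        add_smul]

lemma ctr2_sandwich (H : QuasiHopfData k G) (χ ξ : Module.Dual k G)
    (u v p q : G) (c : A) (L : G ⊗[k] A) :
    ctr2 χ ξ ((u ⊗ₜ[k] (v ⊗ₜ[k] (1:A))) *
        ((TensorProduct.assoc k G G A)
          ((TensorProduct.map H.Δ.toLinearMap LinearMap.id) L)) *
        (p ⊗ₜ[k] (q ⊗ₜ[k] c)))
      = ctrL (H.dmul (QHA.shiftF k G p u χ) (QHA.shiftF k G q v ξ)) L * c := by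
  induction L using TensorProduct.induction_on with
  | zero => simp
  | tmul g x =>
      rw [TensorProduct.map_tmul, ctr2_sandwich_aux]
      simp [QHA.QuasiHopfData.dmul, smul_mul_assoc]
  | add u' v' hu hv =>
      simp only [map_add, add_mul, mul_add, hu, hv]

section HLemmas

variable (H : QuasiHopfData k G)

lemma kappa1_eq (L : G ⊗[k] A) : H.κ1 A L = ctrL H.ε.toLinearMap L := by
  induction L using TensorProduct.induction_on with
  | zero => simp
  | tmul g x => simp [QHA.QuasiHopfData.κ1]
  | add u v hu hv => simp only [map_add, hu, hv]

lemma ctrL_eps_Δ (hH : H.IsQuasiHopf) (g : G) :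
    ctrL H.ε.toLinearMap (H.Δ g) = g := by
  rw [← kappa1_eq (A := G), hH.counit_left]

/-- contraction of the last leg of `M ⊗ G` -/
def ctrR {M : Type} [AddCommGroup M] [Module k M] (χ : Module.Dual k G) :
    M ⊗[k] G →ₗ[k] M :=
  (TensorProduct.rid k M).toLinearMap ∘ₗ TensorProduct.map LinearMap.id χ

@[simp] lemma ctrR_tmul {M : Type} [AddCommGroup M] [Module k M]
    (χ : Module.Dual k G) (m : M) (g : G) :
    ctrR χ (m ⊗ₜ[k] g) = χ g • m := by
  simp [ctrR, TensorProduct.rid_tmul]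

lemma ctrR_eps_Δ (hH : H.IsQuasiHopf) (g : G) :
    ctrR H.ε.toLinearMap (H.Δ g) = g := by
  have h : ∀ w : G ⊗[k] G, H.κ2 G w = ctrR H.ε.toLinearMap w := by
    intro w
    induction w using TensorProduct.induction_on with
    | zero => simp
    | tmul x y => simp [QHA.QuasiHopfData.κ2]
    | add u v hu hv => simp only [map_add, hu, hv]
  rw [← h, hH.counit_right]

lemma dmul_apply (χ ξ : Module.Dual k G) (g : G) :
    H.dmul χ ξ g = (LinearMap.mul' k k) (TensorProduct.map χ ξ (H.Δ g)) := rfl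

lemma mul'_map_eps_left (ξ : Module.Dual k G) (w : G ⊗[k] G) :
    (LinearMap.mul' k k) (TensorProduct.map H.ε.toLinearMap ξ w)
      = ξ (ctrL H.ε.toLinearMap w) := by
  induction w using TensorProduct.induction_on with
  | zero => simp
  | tmul x y => simp [smul_eq_mul]
  | add u v hu hv => simp only [map_add, hu, hv]

lemma mul'_map_eps_right (χ : Module.Dual k G) (w : G ⊗[k] G) :
    (LinearMap.mul' k k) (TensorProduct.map χ H.ε.toLinearMap w)
      = χ (ctrR H.ε.toLinearMap w) := by
  induction w using TensorProduct.induction_on with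
  | zero => simp
  | tmul x y => simp [smul_eq_mul, mul_comm]
  | add u v hu hv => simp only [map_add, hu, hv]

lemma dmul_eps_left (hH : H.IsQuasiHopf) (ξ : Module.Dual k G) :
    H.dmul H.ε.toLinearMap ξ = ξ := by
  ext g
  rw [dmul_apply, mul'_map_eps_left, ctrL_eps_Δ H hH]

lemma dmul_eps_right (hH : H.IsQuasiHopf) (χ : Module.Dual k G) :
    H.dmul χ H.ε.toLinearMap = χ := by
  ext g
  rw [dmul_apply, mul'_map_eps_right, ctrR_eps_Δ H hH]

lemma dmul_smul_left (c : k) (χ ξ : Module.Dual k G) :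
    H.dmul (c • χ) ξ = c • H.dmul χ ξ := by
  ext g
  simp [dmul_apply, TensorProduct.map_smul_left]

lemma dmul_sum_left {ι : Type} (s : Finset ι) (χ : ι → Module.Dual k G)
    (ξ : Module.Dual k G) :
    H.dmul (∑ j ∈ s, χ j) ξ = ∑ j ∈ s, H.dmul (χ j) ξ := by
  ext g
  classical
  induction s using Finset.induction_on with
  | empty => simp [dmul_apply, show TensorProduct.map (0 : Module.Dual k G) ξ
      = 0 from TensorProduct.map_zero_left ξ]
  | insert _ _ h ih =>
      simp only [Finset.sum_insert h, LinearMap.add_apply, ← ih]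
      simp [dmul_apply, TensorProduct.map_add_left]

lemma dmul_smul_right (c : k) (χ ξ : Module.Dual k G) :
    H.dmul χ (c • ξ) = c • H.dmul χ ξ := by
  ext g
  simp [dmul_apply, TensorProduct.map_smul_right]

lemma dmul_sum_right {ι : Type} (s : Finset ι) (χ : Module.Dual k G)
    (ξ : ι → Module.Dual k G) :
    H.dmul χ (∑ j ∈ s, ξ j) = ∑ j ∈ s, H.dmul χ (ξ j) := by
  ext g
  classical
  induction s using Finset.induction_on with
  | empty => simp [dmul_apply, show TensorProduct.map χ (0 : Module.Dual k G)
      = 0 from TensorProduct.map_zero_right χ]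
  | insert _ _ h ih =>
      simp only [Finset.sum_insert h, LinearMap.add_apply, ← ih]
      simp [dmul_apply, TensorProduct.map_add_right]

lemma shiftF_apply (c d : G) (χ : Module.Dual k G) (x : G) :
    QHA.shiftF k G c d χ x = χ (d * x * c) := by
  simp [QHA.shiftF, mul_assoc]

lemma shiftF_smul (c d : G) (e : k) (χ : Module.Dual k G) :
    QHA.shiftF k G c d (e • χ) = e • QHA.shiftF k G c d χ := by
  ext x; simp [shiftF_apply]

lemma shiftF_sum {ι : Type} (s : Finset ι) (c d : G) (χ : ι → Module.Dual k G) :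
    QHA.shiftF k G c d (∑ j ∈ s, χ j) = ∑ j ∈ s, QHA.shiftF k G c d (χ j) := by
  ext x; simp [shiftF_apply]

lemma shiftF_one_one (χ : Module.Dual k G) : QHA.shiftF k G 1 1 χ = χ := by
  ext x; simp [shiftF_apply]

lemma shiftF_eps (c d : G) :
    QHA.shiftF k G c d H.ε.toLinearMap = (H.ε d * H.ε c) • H.ε.toLinearMap := by
  ext x
  simp [shiftF_apply, map_mul]
  ring

section EpsS

variable (H : QuasiHopfData k G)

lemma eps_phi_expr (w : G ⊗[k] (G ⊗[k] G)) :
    H.ε ((LinearMap.mul' k G) (TensorProduct.map (LinearMap.mulRight k H.β)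
      ((LinearMap.mul' k G) ∘ₗ (TensorProduct.map
        ((LinearMap.mulRight k H.α) ∘ₗ H.S.toLinearMap) LinearMap.id)) w))
    = (H.ε H.β * H.ε H.α) *
        (LinearMap.mul' k k) (TensorProduct.map H.ε.toLinearMap
          ((LinearMap.mul' k k) ∘ₗ TensorProduct.map
            (H.ε.toLinearMap ∘ₗ H.S.toLinearMap) H.ε.toLinearMap) w) := by
  induction w using TensorProduct.induction_on with
  | zero => simp
  | tmul x w2 =>
      induction w2 using TensorProduct.induction_on with
      | zero => simp
      | tmul y z =>
          simp only [TensorProduct.map_tmul, LinearMap.comp_apply,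
            LinearMap.mulRight_apply, LinearMap.id_coe, id_eq,
            LinearMap.mul'_apply, map_mul, AlgHom.toLinearMap_apply]
          ring
      | add u v hu hv =>
          simp only [TensorProduct.tmul_add, map_add, hu, hv, mul_add]
  | add u v hu hv => simp only [map_add, hu, hv, mul_add]

lemma eps_alpha_ne (hH : H.IsQuasiHopf) : H.ε H.α ≠ 0 := by
  intro h0
  have h1 := congrArg H.ε hH.antipode_φ
  rw [eps_phi_expr, map_one, h0, mul_zero, zero_mul] at h1
  exact zero_ne_one h1

lemma eps_S (hH : H.IsQuasiHopf) (a : G) : H.ε (H.S a) = H.ε a := by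
  have key : ∀ w : G ⊗[k] G,
      H.ε ((LinearMap.mul' k G) (TensorProduct.map
        ((LinearMap.mulRight k H.α) ∘ₗ H.S.toLinearMap) LinearMap.id w))
      = H.ε H.α * (H.ε.toLinearMap ∘ₗ H.S.toLinearMap) (ctrR H.ε.toLinearMap w) := by
    intro w
    induction w using TensorProduct.induction_on with
    | zero => simp
    | tmul x y =>
        simp only [TensorProduct.map_tmul, LinearMap.comp_apply,
          LinearMap.mulRight_apply, LinearMap.id_coe, id_eq,
          LinearMap.mul'_apply, map_mul, ctrR_tmul, map_smul, smul_eq_mul,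
          AlgHom.toLinearMap_apply]
        ring
    | add u v hu hv => simp only [map_add, hu, hv, mul_add]
  have h1 := congrArg H.ε (hH.antipode_left a)
  rw [key, ctrR_eps_Δ H hH] at h1
  simp only [LinearMap.comp_apply, AlgHom.toLinearMap_apply,
    LinearEquiv.coe_coe, map_smul, smul_eq_mul] at h1
  exact mul_left_cancel₀ (eps_alpha_ne H hH) (h1.trans (mul_comm _ _))

lemma eps_Sinv (hH : H.IsQuasiHopf) (a : G) : H.ε (H.S.symm a) = H.ε a := by
  conv_rhs => rw [show a = H.S (H.S.symm a) from (H.S.apply_symm_apply a).symm]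
  rw [eps_S H hH]

lemma Sinv_one (hH : H.IsQuasiHopf) : H.S.symm 1 = 1 := by
  conv_lhs => rw [← hH.S_one]
  exact H.S.symm_apply_apply 1

lemma ΔL_one : H.ΔL 1 = (1:G) ⊗ₜ[k] ((1:G) ⊗ₜ[k] (1:G)) := by
  rw [map_one]
  rw [Algebra.TensorProduct.one_def, Algebra.TensorProduct.one_def]

lemma ctrL_eps_ΔL (hH : H.IsQuasiHopf) (a : G) :
    ctrL H.ε.toLinearMap (H.ΔL a) = H.Δ a := by
  have sub : ∀ (u : G ⊗[k] G) (y : G),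
      ctrL (M := G ⊗[k] G) H.ε.toLinearMap
        ((Algebra.TensorProduct.assoc k k k G G G) (u ⊗ₜ[k] y))
      = (ctrL H.ε.toLinearMap u) ⊗ₜ[k] y := by
    intro u y
    induction u using TensorProduct.induction_on with
    | zero => simp
    | tmul s t =>
        simp [Algebra.TensorProduct.assoc_tmul, TensorProduct.smul_tmul']
    | add u v hu hv =>
        simp only [TensorProduct.add_tmul, map_add, hu, hv]
  have key : ∀ w : G ⊗[k] G,
      ctrL (M := G ⊗[k] G) H.ε.toLinearMap
        ((Algebra.TensorProduct.assoc k k k G G G)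
          ((Algebra.TensorProduct.map H.Δ (AlgHom.id k G)) w)) = w := by
    intro w
    induction w using TensorProduct.induction_on with
    | zero => simp
    | tmul x y =>
        rw [Algebra.TensorProduct.map_tmul, sub, ctrL_eps_Δ H hH]
        simp
    | add u v hu hv => simp only [map_add, hu, hv]
  have : H.ΔL a = (Algebra.TensorProduct.assoc k k k G G G)
      ((Algebra.TensorProduct.map H.Δ (AlgHom.id k G)) (H.Δ a)) := rfl
  rw [this, key]

lemma E2_eq (hH : H.IsQuasiHopf) (a : G) {ν : Type} [Fintype ν]
    (am1 a0 a1 : ν → G)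
    (hΔ : H.ΔL a = ∑ l : ν, am1 l ⊗ₜ[k] (a0 l ⊗ₜ[k] a1 l)) :
    ∑ l : ν, (H.ε (am1 l) * H.ε (H.S.symm (a1 l))) • a0 l = a := by
  calc ∑ l : ν, (H.ε (am1 l) * H.ε (H.S.symm (a1 l))) • a0 l
      = ctrR H.ε.toLinearMap (ctrL H.ε.toLinearMap (H.ΔL a)) := by
        rw [hΔ, map_sum, map_sum]
        refine Finset.sum_congr rfl fun l _ => ?_
        rw [eps_Sinv H hH]
        simp [smul_smul, mul_comm]
    _ = a := by rw [ctrL_eps_ΔL H hH, ctrR_eps_Δ H hH]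

end EpsS

end HLemmas

section Decomp

variable {ι : Type} [Fintype ι] (b : Module.Basis ι k G)

lemma decomp2 {M : Type} [AddCommGroup M] [Module k M] (x : G ⊗[k] (G ⊗[k] M)) :
    x = ∑ q : ι × ι, b q.1 ⊗ₜ[k] (b q.2 ⊗ₜ[k]
      ctrL (b.coord q.2) (ctrL (b.coord q.1) x)) := by
  rw [Fintype.sum_prod_type]
  conv_lhs => rw [decomp b x]
  refine Finset.sum_congr rfl fun i _ => ?_
  have h1 : b i ⊗ₜ[k] ctrL (b.coord i) x
      = ∑ y : ι, b i ⊗ₜ[k] (b y ⊗ₜ[k] ctrL (b.coord y) (ctrL (b.coord i) x)) := by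
    rw [← TensorProduct.tmul_sum]
    congr 1
    exact decomp b _
  rw [h1]

lemma decomp3 {M : Type} [AddCommGroup M] [Module k M]
    (x : G ⊗[k] (G ⊗[k] (G ⊗[k] M))) :
    x = ∑ q : ι × ι × ι, b q.1 ⊗ₜ[k] (b q.2.1 ⊗ₜ[k] (b q.2.2 ⊗ₜ[k]
      ctrL (b.coord q.2.2) (ctrL (b.coord q.2.1) (ctrL (b.coord q.1) x)))) := by
  rw [Fintype.sum_prod_type]
  conv_lhs => rw [decomp b x]
  refine Finset.sum_congr rfl fun i _ => ?_
  have h1 : b i ⊗ₜ[k] ctrL (b.coord i) x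
      = ∑ y : ι × ι, b i ⊗ₜ[k] (b y.1 ⊗ₜ[k] (b y.2 ⊗ₜ[k]
          ctrL (b.coord y.2) (ctrL (b.coord y.1) (ctrL (b.coord i) x)))) := by
    rw [← TensorProduct.tmul_sum]
    congr 1
    exact decomp2 b _
  rw [h1]

lemma decomp4 (x : G ⊗[k] (G ⊗[k] (G ⊗[k] (G ⊗[k] G)))) :
    x = ∑ p : ι × ι × ι × ι, b p.1 ⊗ₜ[k] (b p.2.1 ⊗ₜ[k] (b p.2.2.1 ⊗ₜ[k]
      (b p.2.2.2 ⊗ₜ[k] ctrL (b.coord p.2.2.2) (ctrL (b.coord p.2.2.1)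
        (ctrL (b.coord p.2.1) (ctrL (b.coord p.1) x)))))) := by
  rw [Fintype.sum_prod_type]
  conv_lhs => rw [decomp b x]
  refine Finset.sum_congr rfl fun i _ => ?_
  have h1 : b i ⊗ₜ[k] ctrL (b.coord i) x
      = ∑ y : ι × ι × ι, b i ⊗ₜ[k] (b y.1 ⊗ₜ[k] (b y.2.1 ⊗ₜ[k] (b y.2.2 ⊗ₜ[k]
          ctrL (b.coord y.2.2) (ctrL (b.coord y.2.1)
            (ctrL (b.coord y.1) (ctrL (b.coord i) x)))))) := by
    rw [← TensorProduct.tmul_sum]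
    congr 1
    exact decomp3 b _
  rw [h1]

lemma p_decomp (ψf : Module.Dual k G) (x y z : G) :
    ψf (x * y * z) = ∑ q : ι × ι, (b.coord q.1) x * (b.coord q.2) y *
      (ψf ∘ₗ LinearMap.mulLeft k (b q.1 * b q.2)) z := by
  rw [Fintype.sum_prod_type]
  conv_lhs => rw [show x = ∑ i, b.repr x i • b i from (b.sum_repr x).symm,
    show y = ∑ j, b.repr y j • b j from (b.sum_repr y).symm]
  rw [Finset.sum_mul, Finset.sum_mul, map_sum]
  refine Finset.sum_congr rfl fun i _ => ?_
  rw [Finset.mul_sum, Finset.sum_mul, map_sum]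
  refine Finset.sum_congr rfl fun j _ => ?_
  simp only [smul_mul_assoc, mul_smul_comm, map_smul, smul_eq_mul,
    LinearMap.comp_apply, LinearMap.mulLeft_apply, Module.Basis.coord_apply]
  ring

lemma p_recon (ψf : Module.Dual k G) (c d : G) :
    QHA.shiftF k G c d ψf = ∑ q : ι × ι, ((b.coord q.1) d *
      (ψf ∘ₗ LinearMap.mulLeft k (b q.1 * b q.2)) c) • b.coord q.2 := by
  ext g
  rw [shiftF_apply, p_decomp b ψf d g c]
  simp only [LinearMap.coe_sum, Finset.sum_apply, LinearMap.smul_apply,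
    smul_eq_mul]
  exact Finset.sum_congr rfl fun q _ => by ring

end Decomp

section IndepMaps

variable (H : QuasiHopfData k G) (γA : G →ₐ[k] A) (L : G ⊗[k] A)

/-- The trilinear map underlying the right hand side of the δ-implementer
condition. -/
def implMap : G ⊗[k] (G ⊗[k] G) →ₗ[k] G ⊗[k] A :=
  TensorProduct.lift (LinearMap.mk₂ k
    (fun u t => (TensorProduct.lift (LinearMap.mk₂ k
      (fun v w => (H.S.symm w ⊗ₜ[k] (1:A)) * L * ((1:G) ⊗ₜ[k] γA v))
      (by intros; simp [TensorProduct.tmul_add, TensorProduct.add_tmul, TensorProduct.tmul_smul, ← TensorProduct.smul_tmul', map_add, map_smul, mul_add, add_mul, smul_mul_assoc, mul_smul_comm])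
      (by intros; simp [TensorProduct.tmul_add, TensorProduct.add_tmul, TensorProduct.tmul_smul, ← TensorProduct.smul_tmul', map_add, map_smul, mul_add, add_mul, smul_mul_assoc, mul_smul_comm])
      (by intros; simp [TensorProduct.tmul_add, TensorProduct.add_tmul, TensorProduct.tmul_smul, ← TensorProduct.smul_tmul', map_add, map_smul, mul_add, add_mul, smul_mul_assoc, mul_smul_comm])
      (by intros; simp [TensorProduct.tmul_add, TensorProduct.add_tmul, TensorProduct.tmul_smul, ← TensorProduct.smul_tmul', map_add, map_smul, mul_add, add_mul, smul_mul_assoc, mul_smul_comm]))) t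
        * (u ⊗ₜ[k] (1:A)))
    (by intros; simp [TensorProduct.tmul_add, TensorProduct.add_tmul, TensorProduct.tmul_smul, ← TensorProduct.smul_tmul', map_add, map_smul, mul_add, add_mul, smul_mul_assoc, mul_smul_comm])
    (by intros; simp [TensorProduct.tmul_add, TensorProduct.add_tmul, TensorProduct.tmul_smul, ← TensorProduct.smul_tmul', map_add, map_smul, mul_add, add_mul, smul_mul_assoc, mul_smul_comm])
    (by intros; simp [TensorProduct.tmul_add, TensorProduct.add_tmul, TensorProduct.tmul_smul, ← TensorProduct.smul_tmul', map_add, map_smul, mul_add, add_mul, smul_mul_assoc, mul_smul_comm])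
    (by intros; simp [TensorProduct.tmul_add, TensorProduct.add_tmul, TensorProduct.tmul_smul, ← TensorProduct.smul_tmul', map_add, map_smul, mul_add, add_mul, smul_mul_assoc, mul_smul_comm]))

lemma implMap_tmul (u v w : G) :
    implMap H γA L (u ⊗ₜ[k] (v ⊗ₜ[k] w))
      = (H.S.symm w ⊗ₜ[k] (1:A)) * L * (u ⊗ₜ[k] γA v) := by
  simp only [implMap, TensorProduct.lift.tmul, LinearMap.mk₂_apply]
  rw [mul_assoc (H.S.symm w ⊗ₜ[k] (1:A) * L),
    Algebra.TensorProduct.tmul_mul_tmul, one_mul, mul_one]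

lemma impl_indep (a : G) {ν : Type} [Fintype ν] (am1 a0 a1 : ν → G)
    (hdec : H.ΔL a = ∑ l : ν, am1 l ⊗ₜ[k] (a0 l ⊗ₜ[k] a1 l)) :
    ∑ l : ν, (H.S.symm (a1 l) ⊗ₜ[k] (1:A)) * L * (am1 l ⊗ₜ[k] γA (a0 l))
      = implMap H γA L (H.ΔL a) := by
  rw [hdec, map_sum]
  exact Finset.sum_congr rfl fun l _ => (implMap_tmul H γA L _ _ _).symm

/-- The 5-linear map underlying the right hand side of the coherence
condition. -/
def cohMap : G ⊗[k] (G ⊗[k] (G ⊗[k] (G ⊗[k] G))) →ₗ[k] G ⊗[k] (G ⊗[k] A) :=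
  let C : G ⊗[k] (G ⊗[k] A) := (TensorProduct.assoc k G G A)
    ((TensorProduct.map H.Δ.toLinearMap LinearMap.id) L)
  let i2 : G ⊗[k] G →ₗ[k] G ⊗[k] (G ⊗[k] A) :=
    TensorProduct.lift (LinearMap.mk₂ k
      (fun o4 o5 => (o5 ⊗ₜ[k] (o4 ⊗ₜ[k] (1:A))) * C)
      (by intros; simp [TensorProduct.tmul_add, TensorProduct.add_tmul, TensorProduct.tmul_smul, ← TensorProduct.smul_tmul', map_add, map_smul, mul_add, add_mul, smul_mul_assoc, mul_smul_comm])
      (by intros; simp [TensorProduct.tmul_add, TensorProduct.add_tmul, TensorProduct.tmul_smul, ← TensorProduct.smul_tmul', map_add, map_smul, mul_add, add_mul, smul_mul_assoc, mul_smul_comm])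
      (by intros; simp [TensorProduct.tmul_add, TensorProduct.add_tmul, TensorProduct.tmul_smul, ← TensorProduct.smul_tmul', map_add, map_smul, mul_add, add_mul, smul_mul_assoc, mul_smul_comm])
      (by intros; simp [TensorProduct.tmul_add, TensorProduct.add_tmul, TensorProduct.tmul_smul, ← TensorProduct.smul_tmul', map_add, map_smul, mul_add, add_mul, smul_mul_assoc, mul_smul_comm]))
  let i3 : G ⊗[k] (G ⊗[k] G) →ₗ[k] G ⊗[k] (G ⊗[k] A) :=
    TensorProduct.lift (LinearMap.mk₂ k
      (fun o3 t => i2 t * ((1:G) ⊗ₜ[k] ((1:G) ⊗ₜ[k] γA o3)))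
      (by intros; simp [TensorProduct.tmul_add, TensorProduct.add_tmul, TensorProduct.tmul_smul, ← TensorProduct.smul_tmul', map_add, map_smul, mul_add, add_mul, smul_mul_assoc, mul_smul_comm])
      (by intros; simp [TensorProduct.tmul_add, TensorProduct.add_tmul, TensorProduct.tmul_smul, ← TensorProduct.smul_tmul', map_add, map_smul, mul_add, add_mul, smul_mul_assoc, mul_smul_comm])
      (by intros; simp [TensorProduct.tmul_add, TensorProduct.add_tmul, TensorProduct.tmul_smul, ← TensorProduct.smul_tmul', map_add, map_smul, mul_add, add_mul, smul_mul_assoc, mul_smul_comm])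
      (by intros; simp [TensorProduct.tmul_add, TensorProduct.add_tmul, TensorProduct.tmul_smul, ← TensorProduct.smul_tmul', map_add, map_smul, mul_add, add_mul, smul_mul_assoc, mul_smul_comm]))
  let i4 : G ⊗[k] (G ⊗[k] (G ⊗[k] G)) →ₗ[k] G ⊗[k] (G ⊗[k] A) :=
    TensorProduct.lift (LinearMap.mk₂ k
      (fun o2 t => i3 t * ((1:G) ⊗ₜ[k] (o2 ⊗ₜ[k] (1:A))))
      (by intros; simp [TensorProduct.tmul_add, TensorProduct.add_tmul, TensorProduct.tmul_smul, ← TensorProduct.smul_tmul', map_add, map_smul, mul_add, add_mul, smul_mul_assoc, mul_smul_comm])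
      (by intros; simp [TensorProduct.tmul_add, TensorProduct.add_tmul, TensorProduct.tmul_smul, ← TensorProduct.smul_tmul', map_add, map_smul, mul_add, add_mul, smul_mul_assoc, mul_smul_comm])
      (by intros; simp [TensorProduct.tmul_add, TensorProduct.add_tmul, TensorProduct.tmul_smul, ← TensorProduct.smul_tmul', map_add, map_smul, mul_add, add_mul, smul_mul_assoc, mul_smul_comm])
      (by intros; simp [TensorProduct.tmul_add, TensorProduct.add_tmul, TensorProduct.tmul_smul, ← TensorProduct.smul_tmul', map_add, map_smul, mul_add, add_mul, smul_mul_assoc, mul_smul_comm]))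
  TensorProduct.lift (LinearMap.mk₂ k
    (fun o1 t => i4 t * (o1 ⊗ₜ[k] ((1:G) ⊗ₜ[k] (1:A))))
    (by intros; simp [TensorProduct.tmul_add, TensorProduct.add_tmul, TensorProduct.tmul_smul, ← TensorProduct.smul_tmul', map_add, map_smul, mul_add, add_mul, smul_mul_assoc, mul_smul_comm])
    (by intros; simp [TensorProduct.tmul_add, TensorProduct.add_tmul, TensorProduct.tmul_smul, ← TensorProduct.smul_tmul', map_add, map_smul, mul_add, add_mul, smul_mul_assoc, mul_smul_comm])
    (by intros; simp [TensorProduct.tmul_add, TensorProduct.add_tmul, TensorProduct.tmul_smul, ← TensorProduct.smul_tmul', map_add, map_smul, mul_add, add_mul, smul_mul_assoc, mul_smul_comm])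
    (by intros; simp [TensorProduct.tmul_add, TensorProduct.add_tmul, TensorProduct.tmul_smul, ← TensorProduct.smul_tmul', map_add, map_smul, mul_add, add_mul, smul_mul_assoc, mul_smul_comm]))

lemma cohMap_tmul (o1 o2 o3 o4 o5 : G) :
    cohMap H γA L (o1 ⊗ₜ[k] (o2 ⊗ₜ[k] (o3 ⊗ₜ[k] (o4 ⊗ₜ[k] o5))))
      = (o5 ⊗ₜ[k] (o4 ⊗ₜ[k] (1:A))) *
          ((TensorProduct.assoc k G G A)
            ((TensorProduct.map H.Δ.toLinearMap LinearMap.id) L)) *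
          (o1 ⊗ₜ[k] (o2 ⊗ₜ[k] γA o3)) := by
  simp only [cohMap, TensorProduct.lift.tmul, LinearMap.mk₂_apply]
  rw [mul_assoc (o5 ⊗ₜ[k] (o4 ⊗ₜ[k] (1:A)) *
      ((TensorProduct.assoc k G G A)
        ((TensorProduct.map H.Δ.toLinearMap LinearMap.id) L)))
      ((1:G) ⊗ₜ[k] ((1:G) ⊗ₜ[k] γA o3)),
    mul_assoc (o5 ⊗ₜ[k] (o4 ⊗ₜ[k] (1:A)) *
      ((TensorProduct.assoc k G G A)
        ((TensorProduct.map H.Δ.toLinearMap LinearMap.id) L)))]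
  rw [Algebra.TensorProduct.tmul_mul_tmul, Algebra.TensorProduct.tmul_mul_tmul,
    Algebra.TensorProduct.tmul_mul_tmul, Algebra.TensorProduct.tmul_mul_tmul]
  simp

lemma coh_indep (Ω : G ⊗[k] (G ⊗[k] (G ⊗[k] (G ⊗[k] G))))
    {ι₅ : Type} [Fintype ι₅] (O1 O2 O3 O4 O5 : ι₅ → G)
    (hdec : Ω = ∑ n : ι₅, O1 n ⊗ₜ[k] (O2 n ⊗ₜ[k] (O3 n ⊗ₜ[k]
      (O4 n ⊗ₜ[k] O5 n)))) :
    ∑ n : ι₅, (O5 n ⊗ₜ[k] (O4 n ⊗ₜ[k] (1:A))) *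
          ((TensorProduct.assoc k G G A)
            ((TensorProduct.map H.Δ.toLinearMap LinearMap.id) L)) *
          (O1 n ⊗ₜ[k] (O2 n ⊗ₜ[k] γA (O3 n)))
      = cohMap H γA L Ω := by
  rw [hdec, map_sum]
  exact Finset.sum_congr rfl fun n _ => (cohMap_tmul H γA L _ _ _ _ _).symm

end IndepMaps

section GammaL

variable (γA : G →ₐ[k] A)

/-- The algebra morphism on `Ĝ ⋈ G` associated to an implementer `L`. -/
def gammaL (L : G ⊗[k] A) : Module.Dual k G ⊗[k] G →ₗ[k] A :=
  TensorProduct.lift (LinearMap.mk₂ k (fun χ a => ctrL χ L * γA a)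
    (by intros; simp [ctrL_add_chi, add_mul])
    (by intros; simp [ctrL_smul_chi, smul_mul_assoc])
    (by intros; simp [map_add, mul_add])
    (by intros; simp [map_smul, mul_smul_comm]))

@[simp] lemma gammaL_tmul (L : G ⊗[k] A) (χ : Module.Dual k G) (a : G) :
    gammaL γA L (χ ⊗ₜ[k] a) = ctrL χ L * γA a := by
  simp [gammaL]

end GammaL

section Dir1

variable (H : QuasiHopfData k G) (γA : G →ₐ[k] A)

lemma shift_expand {ι : Type} [Fintype ι] (b : Module.Basis ι k G) (ψf : Module.Dual k G) (L : G ⊗[k] A) (c d : G) :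
    ctrL (QHA.shiftF k G c d ψf) L
      = ∑ j : ι × ι, ((b.coord j.1) d *
          (ψf ∘ₗ LinearMap.mulLeft k (b j.1 * b j.2)) c) • ctrL (b.coord j.2) L := by
  rw [p_recon b ψf c d, ctrL_sum_chi]
  exact Finset.sum_congr rfl fun j _ => ctrL_smul_chi _ _ _

lemma dir1_mul (hH : H.IsQuasiHopf) {ι : Type} [Fintype ι] (b : Module.Basis ι k G)
    (Ω : G ⊗[k] (G ⊗[k] (G ⊗[k] (G ⊗[k] G))))
    (m : (Module.Dual k G ⊗[k] G) →ₗ[k] (Module.Dual k G ⊗[k] G) →ₗ[k]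
      (Module.Dual k G ⊗[k] G))
    (hm : H.CrossChar Ω m) (L : G ⊗[k] A)
    (hL2 : ∀ a : G, ∀ (ν : Type) (_ : Fintype ν), ∀ am1 a0 a1 : ν → G,
      H.ΔL a = ∑ l : ν, am1 l ⊗ₜ[k] (a0 l ⊗ₜ[k] a1 l) →
      ((1:G) ⊗ₜ[k] γA a) * L
        = ∑ l : ν, (H.S.symm (a1 l) ⊗ₜ[k] (1:A)) * L * (am1 l ⊗ₜ[k] γA (a0 l)))
    (hL3 : ∀ (ι₅ : Type) (_ : Fintype ι₅), ∀ O1 O2 O3 O4 O5 : ι₅ → G,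
      Ω = ∑ n : ι₅, O1 n ⊗ₜ[k] (O2 n ⊗ₜ[k] (O3 n ⊗ₜ[k] (O4 n ⊗ₜ[k] O5 n))) →
      (TensorProduct.map LinearMap.id ((TensorProduct.mk k G A) 1)) L *
          ((1:G) ⊗ₜ[k] L)
        = ∑ n : ι₅, (O5 n ⊗ₜ[k] (O4 n ⊗ₜ[k] (1:A))) *
            ((TensorProduct.assoc k G G A)
              ((TensorProduct.map H.Δ.toLinearMap LinearMap.id) L)) *
            (O1 n ⊗ₜ[k] (O2 n ⊗ₜ[k] γA (O3 n))))
    (φf ψf : Module.Dual k G) (a bb : G) :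
    gammaL γA L (m (φf ⊗ₜ[k] a) (ψf ⊗ₜ[k] bb))
      = gammaL γA L (φf ⊗ₜ[k] a) * gammaL γA L (ψf ⊗ₜ[k] bb) := by
  classical
  -- notation
  set O1 : (ι × ι × ι × ι) → G := fun p => b p.1 with hO1def
  set O2 : (ι × ι × ι × ι) → G := fun p => b p.2.1 with hO2def
  set O3 : (ι × ι × ι × ι) → G := fun p => b p.2.2.1 with hO3def
  set O4 : (ι × ι × ι × ι) → G := fun p => b p.2.2.2 with hO4def
  set O5 : (ι × ι × ι × ι) → G := fun p =>
    ctrL (b.coord p.2.2.2) (ctrL (b.coord p.2.2.1)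
      (ctrL (b.coord p.2.1) (ctrL (b.coord p.1) Ω))) with hO5def
  have hΩdec : Ω = ∑ p : ι × ι × ι × ι,
      O1 p ⊗ₜ[k] (O2 p ⊗ₜ[k] (O3 p ⊗ₜ[k] (O4 p ⊗ₜ[k] O5 p))) := decomp4 b Ω
  set p1 : (ι × ι) → Module.Dual k G := fun j => b.coord j.1 with hp1def
  set p2 : (ι × ι) → Module.Dual k G := fun j => b.coord j.2 with hp2def
  set p3 : (ι × ι) → Module.Dual k G :=
    fun j => ψf ∘ₗ LinearMap.mulLeft k (b j.1 * b j.2) with hp3def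
  have hp : ∀ x y z : G, ψf (x * y * z) = ∑ j : ι × ι, p1 j x * p2 j y * p3 j z :=
    p_decomp b ψf
  set am1 : (ι × ι) → G := fun l => b l.1 with ham1def
  set a0 : (ι × ι) → G := fun l => b l.2 with ha0def
  set a1 : (ι × ι) → G := fun l =>
    ctrL (b.coord l.2) (ctrL (b.coord l.1) (H.ΔL a)) with ha1def
  have hΔdec : H.ΔL a = ∑ l : ι × ι, am1 l ⊗ₜ[k] (a0 l ⊗ₜ[k] a1 l) :=
    decomp2 b (H.ΔL a)
  rw [hm φf ψf a bb (ι × ι × ι × ι) (ι × ι) (ι × ι)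
      inferInstance inferInstance inferInstance
      O1 O2 O3 O4 O5 p1 p2 p3 am1 a0 a1 hΩdec hp hΔdec]
  -- auxiliary facts
  have hI : γA a * ctrL ψf L
      = ∑ l : ι × ι, ctrL (QHA.shiftF k G (am1 l) (H.S.symm (a1 l)) ψf) L
          * γA (a0 l) := by
    have h0 := congrArg (fun t => ctrL ψf t) (hL2 a (ι × ι) inferInstance
      am1 a0 a1 hΔdec)
    simp only [map_sum] at h0
    rw [ctrL_one_mul] at h0
    rw [h0]
    exact Finset.sum_congr rfl fun l _ => ctrL_sandwich _ _ _ _ _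
  have hcoh : ∀ ξ : Module.Dual k G, ctrL φf L * ctrL ξ L
      = ∑ n : ι × ι × ι × ι,
          ctrL (H.dmul (QHA.shiftF k G (O1 n) (O5 n) φf)
            (QHA.shiftF k G (O2 n) (O4 n) ξ)) L * γA (O3 n) := by
    intro ξ
    have h0 := congrArg (fun t => ctr2 φf ξ t)
      (hL3 (ι × ι × ι × ι) inferInstance O1 O2 O3 O4 O5 hΩdec)
    simp only [map_sum] at h0
    rw [ctr2_13_23] at h0
    rw [h0]
    exact Finset.sum_congr rfl fun n _ => ctr2_sandwich H _ _ _ _ _ _ _ _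
  -- expand the left hand side
  rw [map_sum]
  simp only [map_sum, gammaL_tmul, map_mul, map_smul]
  -- the canonical triple sum
  set C : A := ∑ n : ι × ι × ι × ι, ∑ j : ι × ι, ∑ l : ι × ι,
      ((p3 j) (am1 l) * (p1 j) (H.S.symm (a1 l))) •
        (ctrL (H.dmul (QHA.shiftF k G (O1 n) (O5 n) φf)
          (QHA.shiftF k G (O2 n) (O4 n) (p2 j))) L *
          (γA (O3 n) * (γA (a0 l) * γA bb))) with hCdef
  have hLHS : (∑ n : ι × ι × ι × ι, ∑ j : ι × ι,
      ctrL (H.dmul (QHA.shiftF k G (O1 n) (O5 n) φf)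
        (QHA.shiftF k G (O2 n) (O4 n) (p2 j))) L *
        ((γA (O3 n) * ∑ l : ι × ι,
          ((p3 j) (am1 l) * (p1 j) (H.S.symm (a1 l))) • γA (a0 l)) * γA bb)) = C := by
    rw [hCdef]
    refine Finset.sum_congr rfl fun n _ => Finset.sum_congr rfl fun j _ => ?_
    simp only [Finset.mul_sum, Finset.sum_mul, mul_smul_comm, smul_mul_assoc,
      mul_assoc]
  have hRHS : (ctrL φf L * γA a) * (ctrL ψf L * γA bb) = C := by
    calc (ctrL φf L * γA a) * (ctrL ψf L * γA bb)
        = ctrL φf L * ((γA a * ctrL ψf L) * γA bb) := by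
          rw [← mul_assoc, mul_assoc (ctrL φf L) (γA a) (ctrL ψf L), mul_assoc]
      _ = ∑ l : ι × ι, ∑ j : ι × ι,
            ((p1 j) (H.S.symm (a1 l)) * (p3 j) (am1 l)) •
              (ctrL φf L * (ctrL (p2 j) L * (γA (a0 l) * γA bb))) := by
          rw [hI, Finset.sum_mul, Finset.mul_sum]
          refine Finset.sum_congr rfl fun l _ => ?_
          rw [shift_expand b ψf L (am1 l) (H.S.symm (a1 l)),
            Finset.sum_mul, Finset.sum_mul, Finset.mul_sum]
          refine Finset.sum_congr rfl fun j _ => ?_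
          simp only [Finset.mul_sum, Finset.sum_mul, mul_smul_comm,
            smul_mul_assoc, mul_assoc]
          rfl
      _ = ∑ l : ι × ι, ∑ j : ι × ι,
            ((p1 j) (H.S.symm (a1 l)) * (p3 j) (am1 l)) •
              (∑ n : ι × ι × ι × ι,
                ctrL (H.dmul (QHA.shiftF k G (O1 n) (O5 n) φf)
                  (QHA.shiftF k G (O2 n) (O4 n) (p2 j))) L *
                  (γA (O3 n) * (γA (a0 l) * γA bb))) := by
          refine Finset.sum_congr rfl fun l _ => Finset.sum_congr rfl fun j _ => ?_
          congr 1
          have h2 := hcoh (p2 j)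
          have h3 := congrArg (fun t => t * (γA (a0 l) * γA bb)) h2
          rw [mul_assoc] at h3
          rw [h3, Finset.sum_mul]
          refine Finset.sum_congr rfl fun n _ => ?_
          rw [mul_assoc]
      _ = ∑ l : ι × ι, ∑ j : ι × ι, ∑ n : ι × ι × ι × ι,
            ((p3 j) (am1 l) * (p1 j) (H.S.symm (a1 l))) •
              (ctrL (H.dmul (QHA.shiftF k G (O1 n) (O5 n) φf)
                (QHA.shiftF k G (O2 n) (O4 n) (p2 j))) L *
                (γA (O3 n) * (γA (a0 l) * γA bb))) := by
          refine Finset.sum_congr rfl fun l _ => Finset.sum_congr rfl fun j _ => ?_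
          rw [Finset.smul_sum, mul_comm ((p1 j) (H.S.symm (a1 l)))]
      _ = ∑ j : ι × ι, ∑ n : ι × ι × ι × ι, ∑ l : ι × ι,
            ((p3 j) (am1 l) * (p1 j) (H.S.symm (a1 l))) •
              (ctrL (H.dmul (QHA.shiftF k G (O1 n) (O5 n) φf)
                (QHA.shiftF k G (O2 n) (O4 n) (p2 j))) L *
                (γA (O3 n) * (γA (a0 l) * γA bb))) := by
          rw [Finset.sum_comm]
          refine Finset.sum_congr rfl fun j _ => ?_
          rw [Finset.sum_comm]
      _ = C := by
          rw [hCdef, Finset.sum_comm]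
  rw [hLHS, hRHS]
section Dir2A

variable (H : QuasiHopfData k G) (γA : G →ₐ[k] A)

lemma ΔL_one_sum : H.ΔL 1 = ∑ _l : Unit, (1:G) ⊗ₜ[k] ((1:G) ⊗ₜ[k] (1:G)) := by
  rw [ΔL_one, Fintype.sum_unique]

lemma eps_p : ∀ x y z : G, H.ε.toLinearMap (x * y * z)
    = ∑ _j : Unit, H.ε.toLinearMap x * H.ε.toLinearMap y * H.ε.toLinearMap z := by
  intro x y z
  rw [Fintype.sum_unique]
  simp [map_mul]

lemma dmul_eps_shift (hH : H.IsQuasiHopf) (c d : G) (ξ : Module.Dual k G) :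
    H.dmul (QHA.shiftF k G c d H.ε.toLinearMap) ξ = (H.ε d * H.ε c) • ξ := by
  rw [shiftF_eps, dmul_smul_left, dmul_eps_left H hH]

lemma dmul_shift_eps (hH : H.IsQuasiHopf) (c d : G) (χ : Module.Dual k G) :
    H.dmul χ (QHA.shiftF k G c d H.ε.toLinearMap) = (H.ε d * H.ε c) • χ := by
  rw [shiftF_eps, dmul_smul_right, dmul_eps_right H hH]

lemma p_collapse {ι : Type} [Fintype ι] (b : Module.Basis ι k G)
    (χ : Module.Dual k G) (c d : G) :
    ∑ j : ι × ι, ((χ ∘ₗ LinearMap.mulLeft k (b j.1 * b j.2)) 1 * (b.coord j.1) 1) •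
      QHA.shiftF k G c d (b.coord j.2) = QHA.shiftF k G c d χ := by
  ext g
  simp only [LinearMap.coe_sum, Finset.sum_apply, LinearMap.smul_apply,
    smul_eq_mul, shiftF_apply]
  have h := p_decomp b χ 1 (d * g * c) 1
  rw [one_mul, mul_one] at h
  rw [h]
  refine Finset.sum_congr rfl fun j _ => ?_
  simp only [LinearMap.comp_apply, LinearMap.mulLeft_apply, mul_one]
  ring

variable (m : (Module.Dual k G ⊗[k] G) →ₗ[k] (Module.Dual k G ⊗[k] G) →ₗ[k]
    (Module.Dual k G ⊗[k] G))
variable (Ω : G ⊗[k] (G ⊗[k] (G ⊗[k] (G ⊗[k] G))))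

lemma m_one_u (hH : H.IsQuasiHopf) (hm : H.CrossChar Ω m)
    {ι : Type} [Fintype ι] (b : Module.Basis ι k G)
    {ι₅ : Type} [Fintype ι₅] (O1 O2 O3 O4 O5 : ι₅ → G)
    (hΩdec : Ω = ∑ n : ι₅, O1 n ⊗ₜ[k] (O2 n ⊗ₜ[k] (O3 n ⊗ₜ[k] (O4 n ⊗ₜ[k] O5 n))))
    (χ : Module.Dual k G) (x : G) :
    m (H.ε.toLinearMap ⊗ₜ[k] (1:G)) (χ ⊗ₜ[k] x)
      = ∑ n : ι₅, (H.ε (O5 n) * H.ε (O1 n)) •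
          (QHA.shiftF k G (O2 n) (O4 n) χ ⊗ₜ[k] (O3 n * x)) := by
  rw [hm H.ε.toLinearMap χ 1 x ι₅ (ι × ι) Unit inferInstance inferInstance
      inferInstance O1 O2 O3 O4 O5 (fun j => b.coord j.1) (fun j => b.coord j.2)
      (fun j => χ ∘ₗ LinearMap.mulLeft k (b j.1 * b j.2))
      (fun _ => 1) (fun _ => 1) (fun _ => 1) hΩdec (p_decomp b χ) (ΔL_one_sum H)]
  refine Finset.sum_congr rfl fun n _ => ?_
  calc ∑ j : ι × ι, H.dmul (QHA.shiftF k G (O1 n) (O5 n) H.ε.toLinearMap)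
        (QHA.shiftF k G (O2 n) (O4 n) (b.coord j.2)) ⊗ₜ[k]
        (O3 n * (∑ _l : Unit,
          ((χ ∘ₗ LinearMap.mulLeft k (b j.1 * b j.2)) 1 *
            (b.coord j.1) (H.S.symm 1)) • (1:G)) * x)
      = ∑ j : ι × ι, ((H.ε (O5 n) * H.ε (O1 n)) *
          ((χ ∘ₗ LinearMap.mulLeft k (b j.1 * b j.2)) 1 * (b.coord j.1) 1)) •
          (QHA.shiftF k G (O2 n) (O4 n) (b.coord j.2) ⊗ₜ[k] (O3 n * x)) := by
        refine Finset.sum_congr rfl fun j _ => ?_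
        rw [Fintype.sum_unique, Sinv_one H hH, dmul_eps_shift H hH]
        simp only [← TensorProduct.smul_tmul', mul_smul_comm, smul_mul_assoc,
          mul_one, TensorProduct.tmul_smul, smul_smul]
        rw [mul_comm ((χ ∘ₗ LinearMap.mulLeft k (b j.1 * b j.2)) 1 *
          (b.coord j.1) 1)]
    _ = (H.ε (O5 n) * H.ε (O1 n)) •
          ((∑ j : ι × ι, ((χ ∘ₗ LinearMap.mulLeft k (b j.1 * b j.2)) 1 *
            (b.coord j.1) 1) • QHA.shiftF k G (O2 n) (O4 n) (b.coord j.2)) ⊗ₜ[k]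
            (O3 n * x)) := by
        rw [TensorProduct.sum_tmul, Finset.smul_sum]
        refine Finset.sum_congr rfl fun j _ => ?_
        rw [← TensorProduct.smul_tmul', smul_smul]
    _ = (H.ε (O5 n) * H.ε (O1 n)) •
          (QHA.shiftF k G (O2 n) (O4 n) χ ⊗ₜ[k] (O3 n * x)) := by
        rw [p_collapse b χ]

lemma m_u_one (hH : H.IsQuasiHopf) (hm : H.CrossChar Ω m)
    {ι : Type} [Fintype ι] (b : Module.Basis ι k G)
    {ι₅ : Type} [Fintype ι₅] (O1 O2 O3 O4 O5 : ι₅ → G)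
    (hΩdec : Ω = ∑ n : ι₅, O1 n ⊗ₜ[k] (O2 n ⊗ₜ[k] (O3 n ⊗ₜ[k] (O4 n ⊗ₜ[k] O5 n))))
    (χ : Module.Dual k G) (a : G) :
    m (χ ⊗ₜ[k] a) (H.ε.toLinearMap ⊗ₜ[k] (1:G))
      = ∑ n : ι₅, (H.ε (O4 n) * H.ε (O2 n)) •
          (QHA.shiftF k G (O1 n) (O5 n) χ ⊗ₜ[k] (O3 n * a)) := by
  rw [hm χ H.ε.toLinearMap a 1 ι₅ Unit (ι × ι) inferInstance inferInstance
      inferInstance O1 O2 O3 O4 O5 (fun _ => H.ε.toLinearMap)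
      (fun _ => H.ε.toLinearMap) (fun _ => H.ε.toLinearMap)
      (fun l : ι × ι => b l.1) (fun l : ι × ι => b l.2)
      (fun l : ι × ι => ctrL (b.coord l.2) (ctrL (b.coord l.1) (H.ΔL a)))
      hΩdec (eps_p H) (decomp2 b (H.ΔL a))]
  refine Finset.sum_congr rfl fun n _ => ?_
  rw [Fintype.sum_unique, dmul_shift_eps H hH]
  have hE2 : (∑ l : ι × ι, (H.ε.toLinearMap (b l.1) *
      H.ε.toLinearMap (H.S.symm (ctrL (b.coord l.2) (ctrL (b.coord l.1)
        (H.ΔL a))))) • b l.2) = a := by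
    have := E2_eq H hH a (fun l : ι × ι => b l.1) (fun l : ι × ι => b l.2)
      (fun l : ι × ι => ctrL (b.coord l.2) (ctrL (b.coord l.1) (H.ΔL a)))
      (decomp2 b (H.ΔL a))
    simpa [AlgHom.toLinearMap_apply] using this
  rw [hE2, mul_one, ← TensorProduct.smul_tmul']

lemma m_u1_one (hH : H.IsQuasiHopf) (hm : H.CrossChar Ω m)
    {ι₅ : Type} [Fintype ι₅] (O1 O2 O3 O4 O5 : ι₅ → G)
    (hΩdec : Ω = ∑ n : ι₅, O1 n ⊗ₜ[k] (O2 n ⊗ₜ[k] (O3 n ⊗ₜ[k] (O4 n ⊗ₜ[k] O5 n))))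
    (χ : Module.Dual k G) (a : G) :
    m (χ ⊗ₜ[k] (1:G)) (H.ε.toLinearMap ⊗ₜ[k] a)
      = ∑ n : ι₅, (H.ε (O4 n) * H.ε (O2 n)) •
          (QHA.shiftF k G (O1 n) (O5 n) χ ⊗ₜ[k] (O3 n * a)) := by
  rw [hm χ H.ε.toLinearMap 1 a ι₅ Unit Unit inferInstance inferInstance
      inferInstance O1 O2 O3 O4 O5 (fun _ => H.ε.toLinearMap)
      (fun _ => H.ε.toLinearMap) (fun _ => H.ε.toLinearMap)
      (fun _ => 1) (fun _ => 1) (fun _ => 1) hΩdec (eps_p H) (ΔL_one_sum H)]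
  refine Finset.sum_congr rfl fun n _ => ?_
  rw [Fintype.sum_unique, Fintype.sum_unique, Sinv_one H hH,
    dmul_shift_eps H hH]
  simp only [AlgHom.toLinearMap_apply, map_one, one_mul, one_smul, mul_one,
    ← TensorProduct.smul_tmul']

lemma m_u1_v1 (hH : H.IsQuasiHopf) (hm : H.CrossChar Ω m)
    {ι : Type} [Fintype ι] (b : Module.Basis ι k G)
    {ι₅ : Type} [Fintype ι₅] (O1 O2 O3 O4 O5 : ι₅ → G)
    (hΩdec : Ω = ∑ n : ι₅, O1 n ⊗ₜ[k] (O2 n ⊗ₜ[k] (O3 n ⊗ₜ[k] (O4 n ⊗ₜ[k] O5 n))))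
    (χ ξ : Module.Dual k G) :
    m (χ ⊗ₜ[k] (1:G)) (ξ ⊗ₜ[k] (1:G))
      = ∑ n : ι₅, H.dmul (QHA.shiftF k G (O1 n) (O5 n) χ)
          (QHA.shiftF k G (O2 n) (O4 n) ξ) ⊗ₜ[k] O3 n := by
  rw [hm χ ξ 1 1 ι₅ (ι × ι) Unit inferInstance inferInstance inferInstance
      O1 O2 O3 O4 O5 (fun j => b.coord j.1) (fun j => b.coord j.2)
      (fun j => ξ ∘ₗ LinearMap.mulLeft k (b j.1 * b j.2))
      (fun _ => 1) (fun _ => 1) (fun _ => 1) hΩdec (p_decomp b ξ) (ΔL_one_sum H)]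
  refine Finset.sum_congr rfl fun n _ => ?_
  calc ∑ j : ι × ι, H.dmul (QHA.shiftF k G (O1 n) (O5 n) χ)
        (QHA.shiftF k G (O2 n) (O4 n) (b.coord j.2)) ⊗ₜ[k]
        (O3 n * (∑ _l : Unit,
          ((ξ ∘ₗ LinearMap.mulLeft k (b j.1 * b j.2)) 1 *
            (b.coord j.1) (H.S.symm 1)) • (1:G)) * 1)
      = ∑ j : ι × ι, ((ξ ∘ₗ LinearMap.mulLeft k (b j.1 * b j.2)) 1 *
          (b.coord j.1) 1) • (H.dmul (QHA.shiftF k G (O1 n) (O5 n) χ)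
            (QHA.shiftF k G (O2 n) (O4 n) (b.coord j.2)) ⊗ₜ[k] O3 n) := by
        refine Finset.sum_congr rfl fun j _ => ?_
        rw [Fintype.sum_unique, Sinv_one H hH]
        simp only [mul_one, mul_smul_comm, smul_mul_assoc,
          TensorProduct.tmul_smul]
    _ = H.dmul (QHA.shiftF k G (O1 n) (O5 n) χ)
          (∑ j : ι × ι, ((ξ ∘ₗ LinearMap.mulLeft k (b j.1 * b j.2)) 1 *
            (b.coord j.1) 1) • QHA.shiftF k G (O2 n) (O4 n) (b.coord j.2))
          ⊗ₜ[k] O3 n := by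
        rw [dmul_sum_right, TensorProduct.sum_tmul]
        refine Finset.sum_congr rfl fun j _ => ?_
        rw [dmul_smul_right, ← TensorProduct.smul_tmul']
    _ = H.dmul (QHA.shiftF k G (O1 n) (O5 n) χ)
          (QHA.shiftF k G (O2 n) (O4 n) ξ) ⊗ₜ[k] O3 n := by
        rw [p_collapse b ξ]

end Dir2A

section Dir2B

variable (H : QuasiHopfData k G) (γA : G →ₐ[k] A)
variable (m : (Module.Dual k G ⊗[k] G) →ₗ[k] (Module.Dual k G ⊗[k] G) →ₗ[k]
    (Module.Dual k G ⊗[k] G))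
variable (Ω : G ⊗[k] (G ⊗[k] (G ⊗[k] (G ⊗[k] G))))

/-- The element `(ψ₍₂₎-part of the coproduct of ψ evaluated against δ(a))`. -/
def cC {ι : Type} [Fintype ι] (b : Module.Basis ι k G) (H : QuasiHopfData k G)
    (a : G) (ψf : Module.Dual k G) (j : ι × ι) : G :=
  ∑ l : ι × ι, ((ψf ∘ₗ LinearMap.mulLeft k (b j.1 * b j.2)) (b l.1) *
    (b.coord j.1) (H.S.symm (ctrL (b.coord l.2) (ctrL (b.coord l.1) (H.ΔL a)))))
      • b l.2

lemma m_a_psi (hH : H.IsQuasiHopf) (hm : H.CrossChar Ω m)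
    {ι : Type} [Fintype ι] (b : Module.Basis ι k G)
    {ι₅ : Type} [Fintype ι₅] (O1 O2 O3 O4 O5 : ι₅ → G)
    (hΩdec : Ω = ∑ n : ι₅, O1 n ⊗ₜ[k] (O2 n ⊗ₜ[k] (O3 n ⊗ₜ[k] (O4 n ⊗ₜ[k] O5 n))))
    (a : G) (ψf : Module.Dual k G) :
    m (H.ε.toLinearMap ⊗ₜ[k] a) (ψf ⊗ₜ[k] (1:G))
      = ∑ j : ι × ι, ∑ n : ι₅, (H.ε (O5 n) * H.ε (O1 n)) •
          (QHA.shiftF k G (O2 n) (O4 n) (b.coord j.2) ⊗ₜ[k]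
            (O3 n * cC b H a ψf j)) := by
  rw [hm H.ε.toLinearMap ψf a 1 ι₅ (ι × ι) (ι × ι) inferInstance inferInstance
      inferInstance O1 O2 O3 O4 O5 (fun j => b.coord j.1) (fun j => b.coord j.2)
      (fun j => ψf ∘ₗ LinearMap.mulLeft k (b j.1 * b j.2))
      (fun l : ι × ι => b l.1) (fun l : ι × ι => b l.2)
      (fun l : ι × ι => ctrL (b.coord l.2) (ctrL (b.coord l.1) (H.ΔL a)))
      hΩdec (p_decomp b ψf) (decomp2 b (H.ΔL a))]
  rw [Finset.sum_comm]
  refine Finset.sum_congr rfl fun j _ => Finset.sum_congr rfl fun n _ => ?_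
  rw [dmul_eps_shift H hH, mul_one, ← TensorProduct.smul_tmul']
  rfl

lemma star_eq (hH : H.IsQuasiHopf) (hm : H.CrossChar Ω m)
    {ι : Type} [Fintype ι] (b : Module.Basis ι k G)
    {ι₅ : Type} [Fintype ι₅] (O1 O2 O3 O4 O5 : ι₅ → G)
    (hΩdec : Ω = ∑ n : ι₅, O1 n ⊗ₜ[k] (O2 n ⊗ₜ[k] (O3 n ⊗ₜ[k] (O4 n ⊗ₜ[k] O5 n))))
    (γL : Module.Dual k G ⊗[k] G →ₗ[k] A)
    (hGm : ∀ u v, γL (m u v) = γL u * γL v) (hGone : γL H.oneD = 1)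
    (χ : Module.Dual k G) (x : G) :
    γL (∑ n : ι₅, (H.ε (O5 n) * H.ε (O1 n)) •
        (QHA.shiftF k G (O2 n) (O4 n) χ ⊗ₜ[k] (O3 n * x)))
      = γL (χ ⊗ₜ[k] x) := by
  rw [← m_one_u H m Ω hH hm b O1 O2 O3 O4 O5 hΩdec χ x]
  have h1 : H.ε.toLinearMap ⊗ₜ[k] (1:G) = H.oneD := rfl
  rw [h1, hGm, hGone, one_mul]

/-- The implementer associated to `γ_L`. -/
def Lof {ι : Type} [Fintype ι] (b : Module.Basis ι k G)
    (γL : Module.Dual k G ⊗[k] G →ₗ[k] A) : G ⊗[k] A :=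
  ∑ i, b i ⊗ₜ[k] γL (b.coord i ⊗ₜ[k] (1:G))

lemma Lof_ctr {ι : Type} [Fintype ι] (b : Module.Basis ι k G)
    (γL : Module.Dual k G ⊗[k] G →ₗ[k] A) (χ : Module.Dual k G) :
    ctrL χ (Lof b γL) = γL (χ ⊗ₜ[k] (1:G)) := by
  rw [Lof, map_sum]
  simp only [ctrL_tmul]
  calc ∑ i, χ (b i) • γL (b.coord i ⊗ₜ[k] (1:G))
      = γL ((∑ i, χ (b i) • b.coord i) ⊗ₜ[k] (1:G)) := by
        rw [TensorProduct.sum_tmul, map_sum]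
        refine Finset.sum_congr rfl fun i _ => ?_
        rw [← TensorProduct.smul_tmul', map_smul]
    _ = γL (χ ⊗ₜ[k] (1:G)) := by rw [← dual_expand b χ]

lemma dir2 (hH : H.IsQuasiHopf) (hm : H.CrossChar Ω m)
    {ι : Type} [Fintype ι] (b : Module.Basis ι k G)
    (γL : Module.Dual k G ⊗[k] G →ₗ[k] A)
    (hG : GLConds H γA m γL) :
    LConds H γA Ω (Lof b γL) ∧ LRel H γA (Lof b γL) γL := by
  obtain ⟨hGm, hGone, hGiD⟩ := hG
  have honeD : H.oneD = H.ε.toLinearMap ⊗ₜ[k] (1:G) := rfl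
  have hiD : ∀ a : G, H.iD a = H.ε.toLinearMap ⊗ₜ[k] a := fun a => rfl
  have hΩdec := decomp4 b Ω
  -- the relation γ_L (χ ⊗ a) = γ_L (χ ⊗ 1) γ(a)
  have hrel : ∀ (χ : Module.Dual k G) (a : G),
      γL (χ ⊗ₜ[k] a) = γL (χ ⊗ₜ[k] (1:G)) * γA a := by
    intro χ a
    have h1 : γL (χ ⊗ₜ[k] (1:G)) * γA a
        = γL (m (χ ⊗ₜ[k] (1:G)) (H.ε.toLinearMap ⊗ₜ[k] a)) := by
      rw [hGm, ← hiD a, hGiD a]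
    have h2 : m (χ ⊗ₜ[k] (1:G)) (H.ε.toLinearMap ⊗ₜ[k] a)
        = m (χ ⊗ₜ[k] a) (H.ε.toLinearMap ⊗ₜ[k] (1:G)) := by
      rw [m_u1_one H m Ω hH hm _ _ _ _ _ hΩdec χ a,
        m_u_one H m Ω hH hm b _ _ _ _ _ hΩdec χ a]
    have h3 : γL (m (χ ⊗ₜ[k] a) (H.ε.toLinearMap ⊗ₜ[k] (1:G)))
        = γL (χ ⊗ₜ[k] a) := by
      rw [← honeD, hGm, hGone, mul_one]
    rw [h1, h2, h3]
  refine ⟨⟨?_, ?_, ?_⟩, fun χ a => by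
    rw [contractL_eq, Lof_ctr]; exact hrel χ a⟩
  · -- normalization
    rw [kappa1_eq, Lof_ctr, ← honeD, hGone]
  · -- δ-implementer property
    intro a ν fν am1' a0' a1' hdec
    rw [impl_indep H γA (Lof b γL) a am1' a0' a1' hdec,
      ← impl_indep H γA (Lof b γL) a (fun l : ι × ι => b l.1)
        (fun l : ι × ι => b l.2)
        (fun l : ι × ι => ctrL (b.coord l.2) (ctrL (b.coord l.1) (H.ΔL a)))
        (decomp2 b (H.ΔL a))]
    refine ctr_inj b fun ψf => ?_
    rw [ctrL_one_mul, map_sum, Lof_ctr]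
    calc γA a * γL (ψf ⊗ₜ[k] (1:G))
        = γL (m (H.ε.toLinearMap ⊗ₜ[k] a) (ψf ⊗ₜ[k] (1:G))) := by
          rw [hGm, ← hiD a, hGiD a]
      _ = ∑ j : ι × ι, γL (∑ n : ι × ι × ι × ι,
            (H.ε (ctrL (b.coord n.2.2.2) (ctrL (b.coord n.2.2.1)
              (ctrL (b.coord n.2.1) (ctrL (b.coord n.1) Ω)))) * H.ε (b n.1)) •
            (QHA.shiftF k G (b n.2.1) (b n.2.2.2) (b.coord j.2) ⊗ₜ[k]
              ((b n.2.2.1) * cC b H a ψf j))) := by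
          rw [m_a_psi H m Ω hH hm b _ _ _ _ _ hΩdec a ψf, map_sum]
      _ = ∑ j : ι × ι, γL (b.coord j.2 ⊗ₜ[k] cC b H a ψf j) := by
          refine Finset.sum_congr rfl fun j _ => ?_
          exact star_eq H m Ω hH hm b _ _ _ _ _ hΩdec γL hGm hGone
            (b.coord j.2) (cC b H a ψf j)
      _ = ∑ l : ι × ι, ctrL (QHA.shiftF k G (b l.1)
            (H.S.symm (ctrL (b.coord l.2) (ctrL (b.coord l.1) (H.ΔL a)))) ψf)
            (Lof b γL) * γA (b l.2) := by
          symm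
          calc ∑ l : ι × ι, ctrL (QHA.shiftF k G (b l.1)
                (H.S.symm (ctrL (b.coord l.2) (ctrL (b.coord l.1) (H.ΔL a)))) ψf)
                (Lof b γL) * γA (b l.2)
              = ∑ l : ι × ι, ∑ j : ι × ι, ((b.coord j.1)
                  (H.S.symm (ctrL (b.coord l.2) (ctrL (b.coord l.1) (H.ΔL a)))) *
                  (ψf ∘ₗ LinearMap.mulLeft k (b j.1 * b j.2)) (b l.1)) •
                  γL (b.coord j.2 ⊗ₜ[k] b l.2) := by
                refine Finset.sum_congr rfl fun l _ => ?_
                rw [Lof_ctr, ← hrel, p_recon b ψf (b l.1), TensorProduct.sum_tmul,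
                  map_sum]
                refine Finset.sum_congr rfl fun j _ => ?_
                rw [← TensorProduct.smul_tmul', map_smul]
            _ = ∑ j : ι × ι, γL (b.coord j.2 ⊗ₜ[k] cC b H a ψf j) := by
                rw [Finset.sum_comm]
                refine Finset.sum_congr rfl fun j _ => ?_
                rw [cC, TensorProduct.tmul_sum, map_sum]
                refine Finset.sum_congr rfl fun l _ => ?_
                rw [TensorProduct.tmul_smul, map_smul, mul_comm ((b.coord j.1) _)]
      _ = ∑ l : ι × ι, ctrL ψf
            ((H.S.symm (ctrL (b.coord l.2) (ctrL (b.coord l.1) (H.ΔL a)))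
                ⊗ₜ[k] (1:A)) * Lof b γL * (b l.1 ⊗ₜ[k] γA (b l.2))) := by
          refine Finset.sum_congr rfl fun l _ => ?_
          exact (ctrL_sandwich ψf _ _ _ _).symm
  · -- coherence property
    intro ι₅' fι₅' O1' O2' O3' O4' O5' hdec'
    rw [coh_indep H γA (Lof b γL) Ω O1' O2' O3' O4' O5' hdec',
      ← coh_indep H γA (Lof b γL) Ω _ _ _ _ _ hΩdec]
    refine ctr2_inj b fun χ ξ => ?_
    rw [ctr2_13_23, map_sum]
    calc ctrL χ (Lof b γL) * ctrL ξ (Lof b γL)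
        = γL (m (χ ⊗ₜ[k] (1:G)) (ξ ⊗ₜ[k] (1:G))) := by
          rw [Lof_ctr, Lof_ctr, hGm]
      _ = γL (∑ n : ι × ι × ι × ι, H.dmul
            (QHA.shiftF k G (b n.1) (ctrL (b.coord n.2.2.2) (ctrL (b.coord n.2.2.1)
              (ctrL (b.coord n.2.1) (ctrL (b.coord n.1) Ω)))) χ)
            (QHA.shiftF k G (b n.2.1) (b n.2.2.2) ξ) ⊗ₜ[k] (b n.2.2.1)) := by
          rw [m_u1_v1 H m Ω hH hm b _ _ _ _ _ hΩdec χ ξ]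
      _ = ∑ n : ι × ι × ι × ι, ctrL (H.dmul
            (QHA.shiftF k G (b n.1) (ctrL (b.coord n.2.2.2) (ctrL (b.coord n.2.2.1)
              (ctrL (b.coord n.2.1) (ctrL (b.coord n.1) Ω)))) χ)
            (QHA.shiftF k G (b n.2.1) (b n.2.2.2) ξ)) (Lof b γL) *
            γA (b n.2.2.1) := by
          rw [map_sum]
          refine Finset.sum_congr rfl fun n _ => ?_
          rw [hrel, Lof_ctr]
      _ = ∑ n : ι × ι × ι × ι, ctr2 χ ξ
            ((ctrL (b.coord n.2.2.2) (ctrL (b.coord n.2.2.1)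
                (ctrL (b.coord n.2.1) (ctrL (b.coord n.1) Ω))) ⊗ₜ[k]
              (b n.2.2.2 ⊗ₜ[k] (1:A))) *
              ((TensorProduct.assoc k G G A)
                ((TensorProduct.map H.Δ.toLinearMap LinearMap.id) (Lof b γL))) *
              (b n.1 ⊗ₜ[k] (b n.2.1 ⊗ₜ[k] γA (b n.2.2.1)))) := by
          refine Finset.sum_congr rfl fun n _ => ?_
          exact (ctr2_sandwich H χ ξ _ _ _ _ _ _).symm

end Dir2B

end Dir1

end SAux

open QHA in
/-- (Corollary 3.3 of the paper.)  The relation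
`γ_L(φ⋈a) = (φ⊗id)(L)·γ(a)` provides a one-to-one correspondence between unital
algebra morphisms `γ_L : Ĝ⋈G → A` extending `γ` and normal coherent left
diagonal `δ`-implementers `L ∈ G ⊗ A`. -/
theorem statement10
    (k G : Type) [Field k] [Ring G] [Algebra k G] [FiniteDimensional k G]
    (H : QuasiHopfData k G) (hH : H.IsQuasiHopf)
    (A : Type) [Ring A] [Algebra k A] (γA : G →ₐ[k] A)
    (ι ι' ι₂ : Type) [Fintype ι] [Fintype ι'] [Fintype ι₂]
    (X Y Z : ι → G) (P Q R₀ : ι' → G) (T U V W : ι₂ → G)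
    (hφ : H.φ = ∑ i : ι, X i ⊗ₜ[k] (Y i ⊗ₜ[k] Z i))
    (hφ' : H.φ' = ∑ j : ι', P j ⊗ₜ[k] (Q j ⊗ₜ[k] R₀ j))
    (hE : ((1:G) ⊗ₜ[k] H.φ') * H.ooΔ H.φ
        = ∑ i : ι₂, T i ⊗ₜ[k] (U i ⊗ₜ[k] (V i ⊗ₜ[k] W i)))
    (γd f : G ⊗[k] G)
    (hγ : γd = ∑ i : ι₂,
      (H.S (U i) * H.α * V i) ⊗ₜ[k] (H.S (T i) * H.α * W i))
    (hf : f = ∑ i : ι',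
      (TensorProduct.map H.S.toLinearMap H.S.toLinearMap (H.Δop (P i))) * γd *
        H.Δ (Q i * H.β * R₀ i))
    (Φinv : G ⊗[k] (G ⊗[k] (G ⊗[k] (G ⊗[k] G))))
    (hΦ1 : H.bigΦ * Φinv = 1) (hΦ2 : Φinv * H.bigΦ = 1)
    (Ω : G ⊗[k] (G ⊗[k] (G ⊗[k] (G ⊗[k] G))))
    (hΩ : Ω = H.idS2 (QHA.pad45 k G f * Φinv))
    -- the diagonal crossed product multiplication on Ĝ ⊗ G
    (m : (Module.Dual k G ⊗[k] G) →ₗ[k] (Module.Dual k G ⊗[k] G) →ₗ[k]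
      (Module.Dual k G ⊗[k] G))
    (hm : H.CrossChar Ω m) :
    (∀ L : G ⊗[k] A, LConds H γA Ω L →
      ∃! γL : Module.Dual k G ⊗[k] G →ₗ[k] A,
        GLConds H γA m γL ∧ LRel H γA L γL) ∧
    (∀ γL : Module.Dual k G ⊗[k] G →ₗ[k] A, GLConds H γA m γL →
      ∃! L : G ⊗[k] A, LConds H γA Ω L ∧ LRel H γA L γL) := by
  classical
  have b : Module.Basis (Fin (Module.finrank k G)) k G := Module.finBasis k G
  constructor
  · intro L hL
    obtain ⟨hL1, hL2, hL3⟩ := hL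
    refine ⟨SAux.gammaL γA L, ⟨⟨?_, ?_, ?_⟩, ?_⟩, ?_⟩
    · intro u v
      induction u using TensorProduct.induction_on with
      | zero => simp
      | tmul φf a =>
          induction v using TensorProduct.induction_on with
          | zero => simp
          | tmul ψf bb =>
              exact SAux.dir1_mul H γA hH b Ω m hm L hL2 hL3 φf ψf a bb
          | add v1 v2 h1 h2 => simp only [map_add, h1, h2, mul_add]
      | add u1 u2 h1 h2 =>
          simp only [map_add, LinearMap.add_apply, h1, h2, add_mul]
    · show SAux.gammaL γA L (H.ε.toLinearMap ⊗ₜ[k] (1:G)) = 1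
      rw [SAux.gammaL_tmul, map_one, mul_one, ← SAux.kappa1_eq H L, hL1]
    · intro a
      show SAux.gammaL γA L (H.ε.toLinearMap ⊗ₜ[k] a) = γA a
      rw [SAux.gammaL_tmul, ← SAux.kappa1_eq H L, hL1, one_mul]
    · intro χ a
      rw [SAux.contractL_eq, SAux.gammaL_tmul]
    · rintro γ' ⟨_, hrel'⟩
      refine TensorProduct.ext' fun χ a => ?_
      rw [hrel' χ a, SAux.contractL_eq, SAux.gammaL_tmul]
  · intro γL hG
    obtain ⟨hcs, hrel⟩ := SAux.dir2 H γA m Ω hH hm b γL hG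
    refine ⟨SAux.Lof b γL, ⟨hcs, hrel⟩, ?_⟩
    rintro L' ⟨_, hrel'⟩
    refine SAux.ctr_inj b fun χ => ?_
    have h1 := hrel' χ 1
    rw [map_one, mul_one, SAux.contractL_eq] at h1
    rw [SAux.Lof_ctr, h1]
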